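/- arXiv:1908.07118 — 6 statements merged into one kernel-verified Lean document; each statement's English description precedes it below -/
import Mathlib

section
/- Let l₁(x) = ⟨n₁, x⟩ + c₁ and l₂(x) = ⟨n₂, x⟩ + c₂ be affine functions on ℝ^d whose normal vectors n₁, n₂ are linearly independent (so the hyperplanes H₁ = {l₁ = 0} and H₂ = {l₂ = 0} are distinct and non-parallel), and let η ∈ ℝ^d satisfy l₁(η) > 0 and l₂(η) > 0. Then there exist points ζ₁ ∈ H₁ and ζ₂ ∈ H₂ with ζ₁ ≠ ζ₂ such that η lies on the closed segment I joining ζ₁ to ζ₂, and I = {x ∈ L : l₁(x) ≥ 0 and l₂(x) ≥ 0}, where L is the affine line through ζ₁ and ζ₂. -/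
open scoped RealInnerProductSpace

/-- In a real inner product space, if `n₁, n₂` are linearly independent, there is a vector `v`
with `⟪n₁, v⟫ = -1` and `⟪n₂, v⟫ = 1`. -/
lemma exists_vec_inner {E : Type*} [NormedAddCommGroup E] [InnerProductSpace ℝ E]
    {n₁ n₂ : E} (hind : LinearIndependent ℝ ![n₁, n₂]) :
    ∃ v : E, ⟪n₁, v⟫ = -1 ∧ ⟪n₂, v⟫ = 1 := by
  have hpair := LinearIndependent.pair_iff.mp hind
  have hn₁ : n₁ ≠ 0 := by
    intro h
    have := hpair 1 0 (by simp [h])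
    simp at this
  have hn₂ : n₂ ≠ 0 := by
    intro h
    have := hpair 0 1 (by simp [h])
    simp at this
  -- u : component of n₂ orthogonal to n₁
  set u : E := n₂ - (⟪n₁, n₂⟫ / ‖n₁‖ ^ 2) • n₁ with hu_def
  set w : E := n₁ - (⟪n₂, n₁⟫ / ‖n₂‖ ^ 2) • n₂ with hw_def
  have hn₁sq : ⟪n₁, n₁⟫ = ‖n₁‖ ^ 2 := real_inner_self_eq_norm_sq n₁
  have hn₂sq : ⟪n₂, n₂⟫ = ‖n₂‖ ^ 2 := real_inner_self_eq_norm_sq n₂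
  have hn₁n : (‖n₁‖ : ℝ) ^ 2 ≠ 0 := pow_ne_zero 2 (norm_ne_zero_iff.mpr hn₁)
  have hn₂n : (‖n₂‖ : ℝ) ^ 2 ≠ 0 := pow_ne_zero 2 (norm_ne_zero_iff.mpr hn₂)
  have hu₁ : ⟪n₁, u⟫ = 0 := by
    rw [hu_def, inner_sub_right, real_inner_smul_right, hn₁sq]
    field_simp
    ring
  have hw₂ : ⟪n₂, w⟫ = 0 := by
    rw [hw_def, inner_sub_right, real_inner_smul_right, hn₂sq]
    field_simp
    ring
  have hu0 : u ≠ 0 := by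
    intro h
    have : (⟪n₁, n₂⟫ / ‖n₁‖ ^ 2) • n₁ + (-1 : ℝ) • n₂ = 0 := by
      rw [hu_def, sub_eq_zero] at h
      rw [← h]; ring_nf; module
    exact one_ne_zero (neg_eq_zero.mp (hpair _ _ this).2)
  have hw0 : w ≠ 0 := by
    intro h
    have : (-1 : ℝ) • n₁ + (⟪n₂, n₁⟫ / ‖n₂‖ ^ 2) • n₂ = 0 := by
      rw [hw_def, sub_eq_zero] at h
      rw [← h]; ring_nf; module
    exact one_ne_zero (neg_eq_zero.mp (hpair _ _ this).1)
  have hu2 : ⟪n₂, u⟫ = ‖u‖ ^ 2 := by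
    have : ⟪u, u⟫ = ⟪n₂, u⟫ - (⟪n₁, n₂⟫ / ‖n₁‖ ^ 2) * ⟪n₁, u⟫ := by
      rw [hu_def]
      rw [show (n₂ - (⟪n₁, n₂⟫ / ‖n₁‖ ^ 2) • n₁) = n₂ - (⟪n₁, n₂⟫ / ‖n₁‖ ^ 2) • n₁ from rfl]
      rw [inner_sub_left, real_inner_smul_left]
    rw [← real_inner_self_eq_norm_sq, this, hu₁]
    ring
  have hw1 : ⟪n₁, w⟫ = ‖w‖ ^ 2 := by
    have : ⟪w, w⟫ = ⟪n₁, w⟫ - (⟪n₂, n₁⟫ / ‖n₂‖ ^ 2) * ⟪n₂, w⟫ := by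
      rw [hw_def]
      rw [inner_sub_left, real_inner_smul_left]
    rw [← real_inner_self_eq_norm_sq, this, hw₂]
    ring
  have hun : (‖u‖ : ℝ) ^ 2 ≠ 0 := pow_ne_zero 2 (norm_ne_zero_iff.mpr hu0)
  have hwn : (‖w‖ : ℝ) ^ 2 ≠ 0 := pow_ne_zero 2 (norm_ne_zero_iff.mpr hw0)
  refine ⟨(1 / ‖u‖ ^ 2) • u - (1 / ‖w‖ ^ 2) • w, ?_, ?_⟩
  · rw [inner_sub_right, real_inner_smul_right, real_inner_smul_right, hu₁, hw1]
    field_simp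
    ring
  · rw [inner_sub_right, real_inner_smul_right, real_inner_smul_right, hu2, hw₂]
    field_simp
    ring

/-- Lemma 1.2: a segment through η joining the two hyperplanes. -/
theorem stmt_0 (d : ℕ) (hd : 1 ≤ d)
    (n₁ n₂ : EuclideanSpace ℝ (Fin d)) (c₁ c₂ : ℝ)
    (hind : LinearIndependent ℝ ![n₁, n₂])
    (l₁ l₂ : EuclideanSpace ℝ (Fin d) → ℝ)
    (hl₁ : ∀ x, l₁ x = ⟪n₁, x⟫ + c₁) (hl₂ : ∀ x, l₂ x = ⟪n₂, x⟫ + c₂)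
    (η : EuclideanSpace ℝ (Fin d)) (hη₁ : 0 < l₁ η) (hη₂ : 0 < l₂ η) :
    ∃ ζ₁ ζ₂ : EuclideanSpace ℝ (Fin d),
      l₁ ζ₁ = 0 ∧ l₂ ζ₂ = 0 ∧ ζ₁ ≠ ζ₂ ∧ η ∈ segment ℝ ζ₁ ζ₂ ∧
      segment ℝ ζ₁ ζ₂ =
        {x | x ∈ affineSpan ℝ ({ζ₁, ζ₂} : Set (EuclideanSpace ℝ (Fin d))) ∧
          0 ≤ l₁ x ∧ 0 ≤ l₂ x} := by
  obtain ⟨v, hv₁, hv₂⟩ := exists_vec_inner hind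
  set a : ℝ := l₁ η with ha
  set b : ℝ := l₂ η with hb
  have hab : 0 < a + b := by positivity
  set ζ₁ : EuclideanSpace ℝ (Fin d) := η + a • v with hζ₁
  set ζ₂ : EuclideanSpace ℝ (Fin d) := η - b • v with hζ₂
  have hv0 : v ≠ 0 := by
    intro h; rw [h, inner_zero_right] at hv₂; norm_num at hv₂
  -- values of l₁, l₂ at ζ₁, ζ₂
  have key₁ : ∀ t : ℝ, l₁ (η + t • v) = a - t := by
    intro t
    rw [hl₁, inner_add_right, real_inner_smul_right, hv₁, ha, hl₁]
    ring
  have key₂ : ∀ t : ℝ, l₂ (η + t • v) = b + t := by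
    intro t
    rw [hl₂, inner_add_right, real_inner_smul_right, hv₂, hb, hl₂]
    ring
  have hζ₂' : ζ₂ = η + (-b) • v := by rw [hζ₂]; module
  have hz₁₁ : l₁ ζ₁ = 0 := by rw [hζ₁, key₁]; ring
  have hz₂₂ : l₂ ζ₂ = 0 := by rw [hζ₂', key₂]; ring
  have hz₁₂ : l₂ ζ₁ = b + a := by rw [hζ₁, key₂]
  have hz₂₁ : l₁ ζ₂ = a + b := by rw [hζ₂', key₁]; ring
  have hne : ζ₁ ≠ ζ₂ := by
    intro h
    have : l₁ ζ₁ = l₁ ζ₂ := by rw [h]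
    rw [hz₁₁, hz₂₁] at this
    linarith
  -- the difference vector
  have hdiff : ζ₂ - ζ₁ = -((a + b) • v) := by rw [hζ₁, hζ₂]; module
  -- membership of η in segment
  have hη_seg : η ∈ segment ℝ ζ₁ ζ₂ := by
    refine ⟨b / (a + b), a / (a + b), by positivity, by positivity, by field_simp; ring, ?_⟩
    rw [hζ₁, hζ₂]
    have h1 : (b / (a + b)) + (a / (a + b)) = 1 := by field_simp; ring
    have h2 : (b / (a + b)) * a - (a / (a + b)) * b = 0 := by field_simp; ring
    calc (b / (a + b)) • (η + a • v) + (a / (a + b)) • (η - b • v)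
        = ((b / (a + b)) + (a / (a + b))) • η
          + ((b / (a + b)) * a - (a / (a + b)) * b) • v := by module
      _ = η := by rw [h1, h2]; simp
  refine ⟨ζ₁, ζ₂, hz₁₁, hz₂₂, hne, hη_seg, ?_⟩
  ext x
  simp only [Set.mem_setOf_eq]
  constructor
  · rintro ⟨s, t, hs, ht, hst, rfl⟩
    refine ⟨?_, ?_, ?_⟩
    · have h₁ : ζ₁ ∈ affineSpan ℝ ({ζ₁, ζ₂} : Set (EuclideanSpace ℝ (Fin d))) :=
        left_mem_affineSpan_pair ℝ ζ₁ ζ₂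
      have h₂ : ζ₂ ∈ affineSpan ℝ ({ζ₁, ζ₂} : Set (EuclideanSpace ℝ (Fin d))) :=
        right_mem_affineSpan_pair ℝ ζ₁ ζ₂
      have := AffineMap.lineMap_mem (k := ℝ) (Q := affineSpan ℝ
        ({ζ₁, ζ₂} : Set (EuclideanSpace ℝ (Fin d)))) t h₁ h₂
      have hlm : AffineMap.lineMap ζ₁ ζ₂ t = s • ζ₁ + t • ζ₂ := by
        rw [AffineMap.lineMap_apply]
        have : s = 1 - t := by linarith
        rw [this]
        simp only [vsub_eq_sub, vadd_eq_add]
        module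
      rwa [hlm] at this
    · have hz : s • ζ₁ + t • ζ₂ = η + (s * a - t * b) • v := by
        rw [hζ₁, hζ₂]
        have hs1 : s = s * 1 := by ring
        calc s • (η + a • v) + t • (η - b • v)
            = (s + t) • η + (s * a - t * b) • v := by module
          _ = η + (s * a - t * b) • v := by rw [hst, one_smul]
      rw [hz, key₁]
      have : s * a - t * b ≤ a := by nlinarith
      linarith
    · have hz : s • ζ₁ + t • ζ₂ = η + (s * a - t * b) • v := by
        rw [hζ₁, hζ₂]
        calc s • (η + a • v) + t • (η - b • v)
            = (s + t) • η + (s * a - t * b) • v := by module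
          _ = η + (s * a - t * b) • v := by rw [hst, one_smul]
      rw [hz, key₂]
      have : -b ≤ s * a - t * b := by nlinarith
      linarith
  · rintro ⟨hmem, hx₁, hx₂⟩
    -- x = ζ₁ + r • (ζ₂ - ζ₁)
    have hx : (x - ζ₁) +ᵥ ζ₁ ∈ line[ℝ, ζ₁, ζ₂] := by
      simpa [vadd_eq_add, sub_add_cancel] using hmem
    rw [vadd_left_mem_affineSpan_pair] at hx
    obtain ⟨r, hr⟩ := hx
    have hxr : x = ζ₁ + r • (ζ₂ - ζ₁) := by
      rw [vsub_eq_sub] at hr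
      rw [hr]; abel
    have hxr' : x = η + (a - r * (a + b)) • v := by
      rw [hxr, hdiff, hζ₁]
      module
    have hr0 : 0 ≤ r := by
      rw [hxr', key₁] at hx₁
      have h : 0 ≤ (a + b) * r := by linarith
      exact nonneg_of_mul_nonneg_right h hab
    have hr1 : r ≤ 1 := by
      rw [hxr', key₂] at hx₂
      have h : r * (a + b) ≤ 1 * (a + b) := by linarith
      exact le_of_mul_le_mul_right h hab
    refine ⟨1 - r, r, by linarith, hr0, by ring, ?_⟩
    rw [hxr]
    module
end

section
/- Assume condition (★) holds for affine functions l₀, …, l_d on ℝ^d and points p₀, …, p_d. Then the convex hull of {p₀, …, p_d} equals the set {x ∈ ℝ^d : l_j(x) ≥ 0 for all j = 0, …, d}. -/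
open scoped RealInnerProductSpace

/-- Proposition 3.5: under condition (★), the convex hull of `{p₀, …, p_d}` is
exactly `{x : l_j(x) ≥ 0 for all j}`. -/
theorem stmt_7 (d : ℕ) (hd : 1 ≤ d)
    (n : Fin (d + 1) → EuclideanSpace ℝ (Fin d)) (hn : ∀ k, n k ≠ 0)
    (c : Fin (d + 1) → ℝ)
    (l : Fin (d + 1) → EuclideanSpace ℝ (Fin d) → ℝ)
    (hl : ∀ k x, l k x = ⟪n k, x⟫ + c k)
    (p : Fin (d + 1) → EuclideanSpace ℝ (Fin d))
    (hdist : ∀ j k, j ≠ k → p j ≠ p k)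
    (hp : ∀ j, {x : EuclideanSpace ℝ (Fin d) | ∀ k, k ≠ j → l k x = 0} = {p j})
    (hpos : ∀ j, 0 < l j (p j)) :
    convexHull ℝ (Set.range p) = {x : EuclideanSpace ℝ (Fin d) | ∀ j, 0 ≤ l j x} := by
  classical
  -- l k (p j) = 0 for k ≠ j
  have hzero : ∀ k j : Fin (d + 1), k ≠ j → l k (p j) = 0 := by
    intro k j hkj
    have : p j ∈ ({x : EuclideanSpace ℝ (Fin d) | ∀ k, k ≠ j → l k x = 0}) := by
      rw [hp j]; rfl
    exact this k hkj
  -- affine independence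
  have hai : AffineIndependent ℝ p := by
    rw [affineIndependent_iff_of_fintype]
    intro w hw hv k
    rw [Finset.weightedVSub_eq_linear_combination _ hw] at hv
    have key : ⟪n k, ∑ i, w i • p i⟫ = w k * l k (p k) := by
      rw [inner_sum]
      have : ∀ i : Fin (d + 1), ⟪n k, w i • p i⟫ = w i * (l k (p i) - c k) := by
        intro i
        rw [real_inner_smul_right, hl k (p i)]; ring
      rw [Finset.sum_congr rfl fun i _ => this i]
      simp only [mul_sub]
      rw [Finset.sum_sub_distrib, ← Finset.sum_mul, hw, zero_mul, sub_zero,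
        Finset.sum_eq_single k (fun i _ hik => by rw [hzero k i (Ne.symm hik), mul_zero])
          (fun h => absurd (Finset.mem_univ k) h)]
    rw [hv, inner_zero_right] at key
    have := (hpos k).ne'
    rcases mul_eq_zero.mp key.symm with h | h
    · exact h
    · exact absurd h this
  have hspan : affineSpan ℝ (Set.range p) = ⊤ := by
    rw [hai.affineSpan_eq_top_iff_card_eq_finrank_add_one]
    simp [finrank_euclideanSpace]
  let b : AffineBasis (Fin (d + 1)) ℝ (EuclideanSpace ℝ (Fin d)) := ⟨p, hai, hspan⟩
  -- key coordinate formula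
  have hcoord : ∀ (j : Fin (d + 1)) (x : EuclideanSpace ℝ (Fin d)),
      l j x = b.coord j x * l j (p j) := by
    intro j x
    have hsum : ∑ i, b.coord i x = 1 := b.sum_coord_apply_eq_one x
    have hx : (∑ i, b.coord i x • p i) = x := by
      have := b.affineCombination_coord_eq_self x
      rwa [Finset.affineCombination_eq_linear_combination _ _ _ hsum] at this
    have this1 : ∀ i : Fin (d + 1), ⟪n j, b.coord i x • p i⟫ = b.coord i x * (l j (p i) - c j) := by
      intro i
      rw [real_inner_smul_right, hl j (p i)]; ring
    calc l j x = ⟪n j, ∑ i, b.coord i x • p i⟫ + c j := by rw [hx, hl j x]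
      _ = (∑ i, b.coord i x * (l j (p i) - c j)) + c j := by
          rw [inner_sum, Finset.sum_congr rfl fun i _ => this1 i]
      _ = b.coord j x * l j (p j) := by
          simp only [mul_sub]
          rw [Finset.sum_sub_distrib, ← Finset.sum_mul, hsum, one_mul,
            Finset.sum_eq_single j (fun i _ hij => by rw [hzero j i (Ne.symm hij), mul_zero])
              (fun h => absurd (Finset.mem_univ j) h)]
          ring
  have hrange : Set.range p = Set.range b := rfl
  rw [hrange, b.convexHull_eq_nonneg_coord]
  ext x
  simp only [Set.mem_setOf_eq]
  constructor
  · intro h j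
    rw [hcoord j x]
    exact mul_nonneg (h j) (hpos j).le
  · intro h j
    have := h j
    rw [hcoord j x] at this
    exact (mul_nonneg_iff_of_pos_right (hpos j)).mp this
end

section
/- Assume condition (★) holds for affine functions l₀, …, l_d on ℝ^d with normal vectors n₀, …, n_d and points p₀, …, p_d, and let S := {x ∈ ℝ^d : l_k(x) ≥ 0 for all k = 0, …, d}. Then for every x in the interior of S and every j ∈ {0, …, d}: ⟨n_j, x − p_j⟩ < 0, and ⟨n_k, x − p_j⟩ > 0 for every k ≠ j. -/
open scoped RealInnerProductSpace

/-- Lemma 3.6: under condition (★), for interior points `x` of `S` and every `j`,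
`⟨n_j, x − p_j⟩ < 0` and `⟨n_k, x − p_j⟩ > 0` for `k ≠ j`. -/
theorem stmt_8 (d : ℕ) (hd : 1 ≤ d)
    (n : Fin (d + 1) → EuclideanSpace ℝ (Fin d)) (hn : ∀ k, n k ≠ 0)
    (c : Fin (d + 1) → ℝ)
    (l : Fin (d + 1) → EuclideanSpace ℝ (Fin d) → ℝ)
    (hl : ∀ k x, l k x = ⟪n k, x⟫ + c k)
    (p : Fin (d + 1) → EuclideanSpace ℝ (Fin d))
    (hdist : ∀ j k, j ≠ k → p j ≠ p k)
    (hp : ∀ j, {x : EuclideanSpace ℝ (Fin d) | ∀ k, k ≠ j → l k x = 0} = {p j})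
    (hpos : ∀ j, 0 < l j (p j)) :
    ∀ x ∈ interior {y : EuclideanSpace ℝ (Fin d) | ∀ k, 0 ≤ l k y},
      ∀ j, ⟪n j, x - p j⟫ < 0 ∧ ∀ k, k ≠ j → 0 < ⟪n k, x - p j⟫ := by
  have hinner : ∀ k y, ⟪n k, y⟫ = l k y - c k := fun k y => by rw [hl]; ring
  -- l k (p j) = 0 for k ≠ j
  have hz : ∀ j k, k ≠ j → l k (p j) = 0 := by
    intro j k hk
    have hmem : p j ∈ {x : EuclideanSpace ℝ (Fin d) | ∀ k, k ≠ j → l k x = 0} := by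
      rw [hp j]; rfl
    exact hmem k hk
  -- inner products against differences of points
  have hdiff : ∀ k (a b : EuclideanSpace ℝ (Fin d)),
      ⟪n k, a - b⟫ = l k a - l k b := by
    intro k a b
    rw [inner_sub_right, hinner, hinner]; ring
  -- linear independence of p i.succ - p 0
  have hB : LinearIndependent ℝ (fun i : Fin d => p i.succ - p 0) := by
    rw [Fintype.linearIndependent_iff]
    intro g hg i
    have h1 : ⟪n i.succ, ∑ t, g t • (p t.succ - p 0)⟫ = g i * l i.succ (p i.succ) := by
      rw [inner_sum]
      rw [Finset.sum_eq_single i]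
      · rw [real_inner_smul_right, hdiff, hz 0 i.succ (Fin.succ_ne_zero i)]
        ring
      · intro b _ hb
        rw [real_inner_smul_right, hdiff, hz 0 i.succ (Fin.succ_ne_zero i),
          hz b.succ i.succ (fun h => hb (Fin.succ_injective d h.symm))]
        ring
      · intro h; exact absurd (Finset.mem_univ i) h
    rw [hg, inner_zero_right] at h1
    have := hpos i.succ
    have := h1.symm
    nlinarith [hpos i.succ]
  have hcard : Fintype.card (Fin d) = Module.finrank ℝ (EuclideanSpace ℝ (Fin d)) := by
    rw [Fintype.card_fin, finrank_euclideanSpace_fin]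
  have : Nonempty (Fin d) := ⟨⟨0, hd⟩⟩
  have htop := hB.span_eq_top_of_card_eq_finrank hcard
  -- sum of reciprocally-scaled l's at each vertex equals 1
  have hsumv : ∀ j, ∑ k, (l k (p k))⁻¹ * l k (p j) = 1 := by
    intro j
    rw [Finset.sum_eq_single j]
    · exact inv_mul_cancel₀ (ne_of_gt (hpos j))
    · intro b _ hb; rw [hz j b hb]; ring
    · intro h; exact absurd (Finset.mem_univ j) h
  set m : EuclideanSpace ℝ (Fin d) := ∑ k, (l k (p k))⁻¹ • n k with hm_def
  have hm_inner : ∀ y : EuclideanSpace ℝ (Fin d),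
      ⟪m, y⟫ = ∑ k, (l k (p k))⁻¹ * ⟪n k, y⟫ := by
    intro y
    rw [hm_def, sum_inner]
    exact Finset.sum_congr rfl fun k _ => real_inner_smul_left _ _ _
  have hm_perp : ∀ i : Fin d, ⟪m, p i.succ - p 0⟫ = 0 := by
    intro i
    rw [hm_inner]
    have : ∀ k, (l k (p k))⁻¹ * ⟪n k, p i.succ - p 0⟫
        = (l k (p k))⁻¹ * l k (p i.succ) - (l k (p k))⁻¹ * l k (p 0) := by
      intro k; rw [hdiff]; ring
    rw [Finset.sum_congr rfl fun k _ => this k, Finset.sum_sub_distrib,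
      hsumv i.succ, hsumv 0]
    ring
  have hm0 : m = 0 := by
    have hperp : ∀ v ∈ Submodule.span ℝ (Set.range fun i : Fin d => p i.succ - p 0),
        ⟪m, v⟫ = 0 := by
      intro v hv
      induction hv using Submodule.span_induction with
      | mem v hv => obtain ⟨i, rfl⟩ := hv; exact hm_perp i
      | zero => simp
      | add u w _ _ hu hw => rw [inner_add_right, hu, hw]; ring
      | smul a u _ hu => rw [real_inner_smul_right, hu]; ring
    have := hperp m (htop ▸ Submodule.mem_top)
    exact inner_self_eq_zero.mp this
  -- main part
  intro x hx j
  -- strict positivity of each l k at interior points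
  have hstrict : ∀ k, 0 < l k x := by
    intro k
    by_contra hle
    push_neg at hle
    obtain ⟨ε, hε, hball⟩ := Metric.isOpen_iff.1 isOpen_interior x hx
    have hnk : (0:ℝ) < ‖n k‖ := norm_pos_iff.2 (hn k)
    set t : ℝ := ε / (2 * ‖n k‖) with ht_def
    have ht : 0 < t := by positivity
    set y : EuclideanSpace ℝ (Fin d) := x - t • n k with hy_def
    have hyx : dist y x = ε / 2 := by
      rw [hy_def, dist_eq_norm, sub_sub_cancel_left, norm_neg, norm_smul,
        Real.norm_eq_abs, abs_of_pos ht, ht_def]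
      field_simp
    have hymem : y ∈ interior {y : EuclideanSpace ℝ (Fin d) | ∀ k, 0 ≤ l k y} := by
      apply hball
      rw [Metric.mem_ball, hyx]
      linarith
    have hyS : 0 ≤ l k y := (interior_subset hymem) k
    have hly : l k y = l k x - t * ‖n k‖ ^ 2 := by
      rw [hl, hy_def, inner_sub_right, real_inner_smul_right,
        real_inner_self_eq_norm_sq, hl]
      ring
    nlinarith [mul_pos ht (pow_pos hnk 2)]
  -- the key identity at x
  have hsumx : ∑ k, (l k (p k))⁻¹ * l k x = 1 := by
    have h0 : ⟪m, x - p 0⟫ = 0 := by rw [hm0, inner_zero_left]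
    rw [hm_inner] at h0
    have : ∀ k, (l k (p k))⁻¹ * ⟪n k, x - p 0⟫
        = (l k (p k))⁻¹ * l k x - (l k (p k))⁻¹ * l k (p 0) := by
      intro k; rw [hdiff]; ring
    rw [Finset.sum_congr rfl fun k _ => this k, Finset.sum_sub_distrib, hsumv 0] at h0
    linarith
  -- l j x < l j (p j)
  have hlt : l j x < l j (p j) := by
    have hsplit : (l j (p j))⁻¹ * l j x
        + ∑ k ∈ Finset.univ.erase j, (l k (p k))⁻¹ * l k x = 1 := by
      rw [Finset.add_sum_erase Finset.univ (fun k => (l k (p k))⁻¹ * l k x)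
        (Finset.mem_univ j)]
      exact hsumx
    have hpos' : 0 < ∑ k ∈ Finset.univ.erase j, (l k (p k))⁻¹ * l k x := by
      apply Finset.sum_pos
      · intro k _
        exact mul_pos (inv_pos.2 (hpos k)) (hstrict k)
      · have : (Finset.univ.erase j).card = d := by
          rw [Finset.card_erase_of_mem (Finset.mem_univ j), Finset.card_univ]
          simp
        rw [← Finset.card_pos, this]
        omega
    have h1 : (l j (p j))⁻¹ * l j x < 1 := by linarith
    have h2 := hpos j
    calc l j x = l j (p j) * ((l j (p j))⁻¹ * l j x) := by
          field_simp
      _ < l j (p j) * 1 := by exact mul_lt_mul_of_pos_left h1 h2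
      _ = l j (p j) := by ring
  constructor
  · rw [hdiff]; linarith
  · intro k hk
    rw [hdiff, hz j k hk]
    simpa using hstrict k
end

section
/- Let N ≥ d ≥ 1 and let K = {x ∈ ℝ^d : l_i(x) ≥ 0 for all i ∈ {0, …, N}} be compact with nonempty interior, where each l_i(x) = ⟨n_i, x⟩ + c_i is an affine function whose hyperplane H_i = {l_i = 0} meets K. Suppose every d-element subset of the normal vectors {n₀, …, n_N} is linearly independent. Then there exists a nonempty finite collection 𝒜 of (d+1)-element subsets of {0, …, N} (hence of cardinality at most C(N+1, d+1)) such that for each A ∈ 𝒜 the set S_A := {x ∈ ℝ^d : l_i(x) ≥ 0 for all i ∈ A} is a d-dimensional simplex containing K, and K = ⋂_{A ∈ 𝒜} S_A. -/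
open scoped RealInnerProductSpace
open Finset

/-- From a linearly independent family of `d` vectors in `d`-space we get:
vanishing inner products force zero, and any target values are attained. -/
private lemma aux_span {d : ℕ} (hd : 1 ≤ d) {ι : Type*} [Fintype ι]
    (v : ι → EuclideanSpace ℝ (Fin d))
    (hcard : Fintype.card ι = d) (hli : LinearIndependent ℝ v) :
    (∀ x : EuclideanSpace ℝ (Fin d), (∀ j, ⟪v j, x⟫ = 0) → x = 0) ∧
    (∀ t : ι → ℝ, ∃ p : EuclideanSpace ℝ (Fin d), ∀ j, ⟪v j, p⟫ = t j) := by
  have hne : Nonempty ι := by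
    rw [← Fintype.card_pos_iff, hcard]; omega
  set Φ : EuclideanSpace ℝ (Fin d) →ₗ[ℝ] (ι → ℝ) :=
    LinearMap.pi (fun j => (innerSL ℝ (v j)).toLinearMap) with hΦ
  have hΦapp : ∀ x j, Φ x j = ⟪v j, x⟫ := fun x j => rfl
  have hspan : Submodule.span ℝ (Set.range v) = ⊤ := by
    apply hli.span_eq_top_of_card_eq_finrank
    rw [finrank_euclideanSpace_fin]; exact hcard
  have hker : ∀ x : EuclideanSpace ℝ (Fin d), (∀ j, ⟪v j, x⟫ = 0) → x = 0 := by
    intro x hx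
    have hall : ∀ y ∈ Submodule.span ℝ (Set.range v), ⟪y, x⟫ = 0 := by
      intro y hy
      induction hy using Submodule.span_induction with
      | mem y hy => obtain ⟨j, rfl⟩ := hy; exact hx j
      | zero => exact inner_zero_left x
      | add y z _ _ hy hz => rw [inner_add_left, hy, hz, add_zero]
      | smul r y _ hy => rw [real_inner_smul_left, hy, mul_zero]
    have := hall x (by rw [hspan]; trivial)
    exact inner_self_eq_zero.mp this
  refine ⟨hker, ?_⟩
  have hinj : Function.Injective Φ := by
    rw [← LinearMap.ker_eq_bot, Submodule.eq_bot_iff]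
    intro x hx
    rw [LinearMap.mem_ker] at hx
    exact hker x (fun j => by rw [← hΦapp x j, hx]; rfl)
  have hdim : Module.finrank ℝ (EuclideanSpace ℝ (Fin d)) = Module.finrank ℝ (ι → ℝ) := by
    rw [finrank_euclideanSpace_fin, Module.finrank_pi, hcard]
  have hsurj : Function.Surjective Φ :=
    (LinearMap.injective_iff_surjective_of_finrank_eq_finrank hdim).mp hinj
  intro t
  obtain ⟨p, hp⟩ := hsurj t
  exact ⟨p, fun j => by rw [← hΦapp p j, hp]⟩

/-- Duality: with trivial recession cone, every index participates with positive
weight in a nonnegative vanishing combination of the normals. -/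
private lemma aux_cone {d N : ℕ} (hd : 1 ≤ d)
    (n : Fin (N + 1) → EuclideanSpace ℝ (Fin d)) (hn : ∀ i, n i ≠ 0)
    (hrec : ∀ y : EuclideanSpace ℝ (Fin d), (∀ j, 0 ≤ ⟪n j, y⟫) → y = 0)
    (i : Fin (N + 1)) :
    ∃ lam : Fin (N + 1) → ℝ, (∀ j, 0 ≤ lam j) ∧ 0 < lam i ∧ ∑ j, lam j • n j = 0 := by
  classical
  set T : (Fin (N + 1) → ℝ) → EuclideanSpace ℝ (Fin d) :=
    fun w => ∑ j, w j • n j with hT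
  have hTlin : IsLinearMap ℝ T := by
    constructor
    · intro a b
      simp only [hT, Pi.add_apply, add_smul]
      rw [Finset.sum_add_distrib]
    · intro r a
      simp only [hT, Pi.smul_apply, smul_eq_mul, mul_smul]
      rw [Finset.smul_sum]
  have hTcont : Continuous T := by
    apply continuous_finset_sum
    intro j _
    exact (continuous_apply j).smul continuous_const
  set D : Set (EuclideanSpace ℝ (Fin d)) := T '' stdSimplex ℝ (Fin (N + 1)) with hD
  have hDconv : Convex ℝ D := (convex_stdSimplex ℝ _).is_linear_image hTlin
  have hDcomp : IsCompact D := (isCompact_stdSimplex ℝ _).image hTcont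
  have hnD : ∀ j, n j ∈ D := by
    intro j
    refine ⟨Pi.single j 1, single_mem_stdSimplex ℝ j, ?_⟩
    show ∑ k, (Pi.single j 1 : Fin (N + 1) → ℝ) k • n k = n j
    rw [Finset.sum_eq_single j (fun b _ hb => by
      rw [Pi.single_eq_of_ne hb, zero_smul])
      (fun h => absurd (Finset.mem_univ j) h)]
    rw [Pi.single_eq_same, one_smul]
  have hnt : Nontrivial (EuclideanSpace ℝ (Fin d)) := ⟨n i, 0, hn i⟩
  set g : EuclideanSpace ℝ (Fin d) → ℝ := fun y => ∑ j, max ⟪n j, y⟫ 0 with hg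
  have hgcont : Continuous g := by
    apply continuous_finset_sum
    intro j _
    exact (innerSL ℝ (n j)).continuous.max continuous_const
  have hsph : (Metric.sphere (0 : EuclideanSpace ℝ (Fin d)) 1).Nonempty :=
    NormedSpace.sphere_nonempty.mpr zero_le_one
  obtain ⟨y₁, hy₁, hymin⟩ :=
    (isCompact_sphere (0 : EuclideanSpace ℝ (Fin d)) 1).exists_isMinOn hsph
      hgcont.continuousOn
  set ε := g y₁ with hε
  have hy₁norm : ‖y₁‖ = 1 := by simpa using hy₁
  have hεpos : 0 < ε := by
    have hy₁ne : y₁ ≠ 0 := by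
      intro h; rw [h, norm_zero] at hy₁norm; exact one_ne_zero hy₁norm.symm
    have hnot : ¬ (∀ j, 0 ≤ ⟪n j, -y₁⟫) := fun h => hy₁ne (neg_eq_zero.mp (hrec _ h))
    push_neg at hnot
    obtain ⟨j, hj⟩ := hnot
    rw [hε, hg]
    apply Finset.sum_pos' (fun k _ => le_max_right _ _)
    refine ⟨j, Finset.mem_univ j, ?_⟩
    have : 0 < ⟪n j, y₁⟫ := by
      rw [inner_neg_right] at hj
      linarith
    exact lt_max_of_lt_left this
  have hball : ∀ v : EuclideanSpace ℝ (Fin d), ‖v‖ < ε / (N + 1) → v ∈ D := by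
    intro v hv
    by_contra hvD
    obtain ⟨f, u, hfD, hfv⟩ :=
      geometric_hahn_banach_closed_point hDconv hDcomp.isClosed hvD
    set y := (InnerProductSpace.toDual ℝ (EuclideanSpace ℝ (Fin d))).symm f with hy
    have hyapp : ∀ x, ⟪y, x⟫ = f x := fun x => InnerProductSpace.toDual_symm_apply
    have hyne : y ≠ 0 := by
      intro h
      have h0 : ∀ x, f x = 0 := fun x => by rw [← hyapp, h, inner_zero_left]
      have h1 := hfD (n i) (hnD i)
      rw [h0] at h1
      have h2 := hfv
      rw [h0] at h2
      linarith
    have hynorm : 0 < ‖y‖ := norm_pos_iff.mpr hyne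
    set z := ‖y‖⁻¹ • y with hz
    have hzmem : z ∈ Metric.sphere (0 : EuclideanSpace ℝ (Fin d)) 1 := by
      rw [mem_sphere_zero_iff_norm, hz, norm_smul, Real.norm_eq_abs,
        abs_of_pos (by positivity), inv_mul_cancel₀ hynorm.ne']
    have hgz : ε ≤ g z := hymin hzmem
    have hNpos : (0 : ℝ) < N + 1 := by positivity
    have hex : ∃ j ∈ (Finset.univ : Finset (Fin (N + 1))),
        ε / (N + 1) ≤ max ⟪n j, z⟫ 0 := by
      apply Finset.exists_le_of_sum_le Finset.univ_nonempty
      have hsum : ∑ _j : Fin (N + 1), ε / (N + 1) = ε := by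
        rw [Finset.sum_const, Finset.card_univ, Fintype.card_fin, nsmul_eq_mul]
        field_simp
        norm_num
      rw [hsum]
      exact hgz
    obtain ⟨j, _, hj⟩ := hex
    have hjpos : ε / (N + 1) ≤ ⟪n j, z⟫ := by
      rcases le_or_gt ⟪n j, z⟫ 0 with h | h
      · exfalso
        rw [max_eq_right h] at hj
        have : (0 : ℝ) < ε / (N + 1) := by positivity
        linarith
      · rwa [max_eq_left h.le] at hj
    have hzy : ⟪n j, y⟫ = ‖y‖ * ⟪n j, z⟫ := by
      rw [hz, real_inner_smul_right, ← mul_assoc, mul_inv_cancel₀ hynorm.ne', one_mul]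
    have h1 : ‖y‖ * (ε / (N + 1)) ≤ ⟪n j, y⟫ := by
      rw [hzy]
      exact mul_le_mul_of_nonneg_left hjpos hynorm.le
    have h2 : ⟪n j, y⟫ < u := by
      rw [real_inner_comm, hyapp]
      exact hfD (n j) (hnD j)
    have h3 : u < ⟪y, v⟫ := by rw [hyapp]; exact hfv
    have h4 : ⟪y, v⟫ ≤ ‖y‖ * ‖v‖ := real_inner_le_norm y v
    have h5 : ‖y‖ * ‖v‖ < ‖y‖ * (ε / (N + 1)) := by
      exact mul_lt_mul_of_pos_left hv hynorm
    linarith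
  have hnipos : 0 < ‖n i‖ := norm_pos_iff.mpr (hn i)
  set t := ε / (N + 1) / (2 * ‖n i‖) with ht
  have htpos : 0 < t := by positivity
  have hvnorm : ‖(-t) • n i‖ < ε / (N + 1) := by
    rw [norm_smul, Real.norm_eq_abs, abs_neg, abs_of_pos htpos, ht]
    rw [div_mul_eq_mul_div, div_lt_iff₀ (by positivity)]
    have : 0 < ε / (N + 1) := by positivity
    nlinarith
  obtain ⟨w, hwmem, hwT⟩ := hball _ hvnorm
  obtain ⟨hw0, hwsum⟩ := hwmem
  refine ⟨fun j => w j + t * (Pi.single i 1 : Fin (N + 1) → ℝ) j, ?_, ?_, ?_⟩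
  · intro j
    show 0 ≤ w j + t * (Pi.single i 1 : Fin (N + 1) → ℝ) j
    have h1 : (0 : ℝ) ≤ (Pi.single i 1 : Fin (N + 1) → ℝ) j := by
      rcases eq_or_ne i j with rfl | hne
      · simp
      · rw [Pi.single_eq_of_ne (Ne.symm hne)]
    have := hw0 j
    nlinarith
  · show 0 < w i + t * (Pi.single i 1 : Fin (N + 1) → ℝ) i
    rw [Pi.single_eq_same, mul_one]
    have := hw0 i
    nlinarith
  · show ∑ j, (w j + t * (Pi.single i 1 : Fin (N + 1) → ℝ) j) • n j = 0
    have hsplit : ∑ j, (w j + t * (Pi.single i 1 : Fin (N + 1) → ℝ) j) • n j =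
        (∑ j, w j • n j) + ∑ j, (t * (Pi.single i 1 : Fin (N + 1) → ℝ) j) • n j := by
      rw [← Finset.sum_add_distrib]
      congr 1
      ext j
      rw [add_smul]
    rw [hsplit]
    have h2 : ∑ j, (t * (Pi.single i 1 : Fin (N + 1) → ℝ) j) • n j = t • n i := by
      rw [Finset.sum_eq_single i (fun b _ hb => by
        rw [Pi.single_eq_of_ne hb, mul_zero, zero_smul]) (by simp)]
      rw [Pi.single_eq_same, mul_one]
    rw [h2]
    have h3 : ∑ j, w j • n j = (-t) • n i := hwT
    rw [h3, neg_smul, neg_add_cancel]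

/-- Carathéodory-type reduction: a nonnegative vanishing combination with
`lam i > 0` can be reduced to support exactly `d+1`, keeping `i`. -/
private lemma aux_reduce {d N : ℕ} (hdN : d ≤ N)
    (n : Fin (N + 1) → EuclideanSpace ℝ (Fin d))
    (hind : ∀ s : Finset (Fin (N + 1)), s.card = d →
      LinearIndependent ℝ (fun i : s => n i)) :
    ∀ (s : Finset (Fin (N + 1))) (lam : Fin (N + 1) → ℝ) (i : Fin (N + 1)),
      i ∈ s → (∀ j ∈ s, 0 ≤ lam j) → 0 < lam i → (∑ j ∈ s, lam j • n j = 0) →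
      ∃ (A : Finset (Fin (N + 1))) (μ : Fin (N + 1) → ℝ), i ∈ A ∧ A.card = d + 1 ∧
        (∀ j ∈ A, 0 < μ j) ∧ ∑ j ∈ A, μ j • n j = 0 := by
  classical
  intro s
  induction s using Finset.strongInduction with
  | _ s ih =>
  intro lam i his hnn hpos hsum
  set s' := s.filter (fun j => 0 < lam j) with hs'
  have his' : i ∈ s' := Finset.mem_filter.mpr ⟨his, hpos⟩
  have hsub : s' ⊆ s := Finset.filter_subset _ _
  have hpos' : ∀ j ∈ s', 0 < lam j := fun j hj => (Finset.mem_filter.mp hj).2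
  have hsum' : ∑ j ∈ s', lam j • n j = 0 := by
    rw [← hsum]
    apply Finset.sum_subset hsub
    intro j hjs hjs'
    have h0 : lam j = 0 := by
      have h1 := hnn j hjs
      by_contra hne
      exact hjs' (Finset.mem_filter.mpr ⟨hjs, lt_of_le_of_ne h1 (Ne.symm hne)⟩)
    rw [h0, zero_smul]
  rcases lt_trichotomy s'.card (d + 1) with hlt | heq | hgt
  · exfalso
    have hle : s'.card ≤ d := by omega
    obtain ⟨u, hs'u, _, hucard⟩ :=
      Finset.exists_subsuperset_card_eq (Finset.subset_univ s') hle
        (by rw [Finset.card_univ, Fintype.card_fin]; omega)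
    have hli := hind u hucard
    set gext : Fin (N + 1) → ℝ := fun k => if k ∈ s' then lam k else 0 with hgext
    have hgsum : ∑ j : u, gext j • n (j : Fin (N + 1)) = 0 := by
      rw [Finset.sum_coe_sort u (fun k => gext k • n k)]
      have h1 : ∀ k ∈ u, gext k • n k = if k ∈ s' then lam k • n k else 0 := by
        intro k _
        show (if k ∈ s' then lam k else 0) • n k = if k ∈ s' then lam k • n k else 0
        by_cases hk : k ∈ s'
        · rw [if_pos hk, if_pos hk]
        · rw [if_neg hk, if_neg hk, zero_smul]
      rw [Finset.sum_congr rfl h1, Finset.sum_ite_mem,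
        Finset.inter_eq_right.mpr hs'u, hsum']
    have hall := Fintype.linearIndependent_iff.mp hli (fun j => gext j) hgsum
    have := hall ⟨i, hs'u his'⟩
    rw [hgext] at this
    simp only [if_pos his'] at this
    exact (ne_of_gt hpos) this
  · exact ⟨s', lam, his', heq, hpos', hsum'⟩
  · have hcard_erase : d + 1 ≤ (s'.erase i).card := by
      rw [Finset.card_erase_of_mem his']; omega
    obtain ⟨t, hts, htcard⟩ := Finset.exists_subset_card_eq hcard_erase
    have hnotli : ¬ LinearIndependent ℝ (fun j : t => n (j : Fin (N + 1))) := by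
      intro hli
      have hcard := hli.fintype_card_le_finrank
      rw [finrank_euclideanSpace_fin, Fintype.card_coe, htcard] at hcard
      omega
    rw [Fintype.not_linearIndependent_iff] at hnotli
    obtain ⟨gg, hgsum, j₁, hj₁⟩ := hnotli
    have hmain : ∃ ν : Fin (N + 1) → ℝ, (∀ k, k ∉ t → ν k = 0) ∧
        (∑ k ∈ t, ν k • n k = 0) ∧ ∃ j ∈ t, 0 < ν j := by
      set ν0 : Fin (N + 1) → ℝ := fun k => if h : k ∈ t then gg ⟨k, h⟩ else 0 with hν0
      have hν0t : ∀ j : t, ν0 (j : Fin (N + 1)) = gg j := by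
        intro j
        rw [hν0]
        simp
      have hν0out : ∀ k, k ∉ t → ν0 k = 0 := fun k hk => dif_neg hk
      have hν0sum : ∑ k ∈ t, ν0 k • n k = 0 := by
        rw [← Finset.sum_coe_sort t (fun k => ν0 k • n k), ← hgsum]
        apply Finset.sum_congr rfl
        intro j _
        rw [hν0t j]
      by_cases hcase : ∃ j ∈ t, 0 < ν0 j
      · exact ⟨ν0, hν0out, hν0sum, hcase⟩
      · push_neg at hcase
        refine ⟨-ν0, fun k hk => by rw [Pi.neg_apply, hν0out k hk, neg_zero], ?_,
          j₁, j₁.2, ?_⟩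
        · have : ∑ k ∈ t, (-ν0) k • n k = -∑ k ∈ t, ν0 k • n k := by
            rw [← Finset.sum_neg_distrib]
            apply Finset.sum_congr rfl
            intro k _
            rw [Pi.neg_apply, neg_smul]
          rw [this, hν0sum, neg_zero]
        · have h1 := hcase (j₁ : Fin (N + 1)) j₁.2
          have h2 : ν0 (j₁ : Fin (N + 1)) ≠ 0 := by rw [hν0t j₁]; exact hj₁
          rw [Pi.neg_apply]
          rcases lt_or_eq_of_le h1 with h | h
          · linarith
          · exact absurd h h2
    obtain ⟨ν, hνout, hνsum, j₂, hj₂t, hj₂pos⟩ := hmain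
    set P := t.filter (fun j => 0 < ν j) with hP
    have hPne : P.Nonempty := ⟨j₂, Finset.mem_filter.mpr ⟨hj₂t, hj₂pos⟩⟩
    obtain ⟨j₀, hj₀P, hj₀min⟩ := P.exists_min_image (fun j => lam j / ν j) hPne
    have hj₀t : j₀ ∈ t := (Finset.mem_filter.mp hj₀P).1
    have hj₀ν : 0 < ν j₀ := (Finset.mem_filter.mp hj₀P).2
    have hts' : t ⊆ s' := hts.trans (Finset.erase_subset i s')
    have hj₀s' : j₀ ∈ s' := hts' hj₀t
    have hj₀lam : 0 < lam j₀ := hpos' j₀ hj₀s'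
    set cc := lam j₀ / ν j₀ with hcc
    have hccpos : 0 ≤ cc := le_of_lt (div_pos hj₀lam hj₀ν)
    set lam' : Fin (N + 1) → ℝ := fun j => lam j - cc * ν j with hlam'
    have hνle : ∀ j ∈ s', 0 ≤ lam' j := by
      intro j hj
      show 0 ≤ lam j - cc * ν j
      rcases le_or_gt (ν j) 0 with hν | hν
      · nlinarith [(hpos' j hj).le]
      · have hjt : j ∈ t := by
          by_contra h
          rw [hνout j h] at hν
          exact lt_irrefl 0 hν
        have hjP : j ∈ P := Finset.mem_filter.mpr ⟨hjt, hν⟩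
        have hmin := hj₀min j hjP
        have h2 : cc * ν j ≤ (lam j / ν j) * ν j :=
          mul_le_mul_of_nonneg_right hmin hν.le
        rw [div_mul_cancel₀ _ hν.ne'] at h2
        linarith
    have hit : i ∉ t := fun h => (Finset.notMem_erase i s') (hts h)
    have hlam'i : 0 < lam' i := by
      show 0 < lam i - cc * ν i
      rw [hνout i hit, mul_zero, sub_zero]
      exact hpos
    have hlam'sum : ∑ j ∈ s', lam' j • n j = 0 := by
      have heq1 : ∑ j ∈ s', lam' j • n j =
          (∑ j ∈ s', lam j • n j) - cc • ∑ j ∈ s', ν j • n j := by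
        rw [Finset.smul_sum, ← Finset.sum_sub_distrib]
        apply Finset.sum_congr rfl
        intro j _
        rw [hlam', sub_smul, smul_smul]
      have hν' : ∑ j ∈ s', ν j • n j = ∑ j ∈ t, ν j • n j := by
        symm
        apply Finset.sum_subset hts'
        intro k _ hkt
        rw [hνout k hkt, zero_smul]
      rw [heq1, hsum', hν', hνsum, smul_zero, sub_zero]
    have hlam'j₀ : lam' j₀ = 0 := by
      show lam j₀ - cc * ν j₀ = 0
      rw [hcc, div_mul_cancel₀ _ hj₀ν.ne', sub_self]
    have hssub : s'.erase j₀ ⊂ s := by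
      refine (Finset.ssubset_iff_of_subset
        ((Finset.erase_subset _ _).trans hsub)).mpr
        ⟨j₀, hsub hj₀s', Finset.notMem_erase j₀ s'⟩
    have hij₀ : i ≠ j₀ := by
      intro h
      exact hit (h ▸ hj₀t)
    have hie : i ∈ s'.erase j₀ := Finset.mem_erase.mpr ⟨hij₀, his'⟩
    have hsum_erase : ∑ j ∈ s'.erase j₀, lam' j • n j = 0 := by
      have h1 := Finset.add_sum_erase s' (fun j => lam' j • n j) hj₀s'
      rw [hlam'j₀, zero_smul, zero_add] at h1
      rw [h1, hlam'sum]
    exact ih (s'.erase j₀) hssub lam' i hie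
      (fun j hj => hνle j (Finset.mem_of_mem_erase hj)) hlam'i hsum_erase

/-- The simplex lemma: a `d+1`-set of constraints with a positive vanishing
combination of its normals cuts out a simplex. -/
private lemma aux_simplex {d N : ℕ} (hd : 1 ≤ d)
    (n : Fin (N + 1) → EuclideanSpace ℝ (Fin d)) (c : Fin (N + 1) → ℝ)
    (l : Fin (N + 1) → EuclideanSpace ℝ (Fin d) → ℝ)
    (hl : ∀ i x, l i x = ⟪n i, x⟫ + c i)
    (hind : ∀ s : Finset (Fin (N + 1)), s.card = d →
      LinearIndependent ℝ (fun i : s => n i))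
    (x₀ : EuclideanSpace ℝ (Fin d)) (hx₀ : ∀ i, 0 < l i x₀)
    (A : Finset (Fin (N + 1))) (hA : A.card = d + 1)
    (μ : Fin (N + 1) → ℝ) (hμ : ∀ j ∈ A, 0 < μ j)
    (hrel : ∑ j ∈ A, μ j • n j = 0) :
    ∃ p : Fin (d + 1) → EuclideanSpace ℝ (Fin d),
      AffineIndependent ℝ p ∧
      {x : EuclideanSpace ℝ (Fin d) | ∀ i ∈ A, 0 ≤ l i x} =
        convexHull ℝ (Set.range p) := by
  classical
  set σ := ∑ j ∈ A, μ j * c j with hσ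
  have hkey : ∀ x, ∑ j ∈ A, μ j * l j x = σ := by
    intro x
    have h1 : ∀ j ∈ A, μ j * l j x = μ j * ⟪n j, x⟫ + μ j * c j := by
      intro j _
      rw [hl]
      ring
    rw [Finset.sum_congr rfl h1, Finset.sum_add_distrib]
    have h2 : ∑ j ∈ A, μ j * ⟪n j, x⟫ = ⟪∑ j ∈ A, μ j • n j, x⟫ := by
      rw [sum_inner]
      apply Finset.sum_congr rfl
      intro j _
      rw [real_inner_smul_left]
    rw [h2, hrel, inner_zero_left, zero_add, hσ]
  have hAne : A.Nonempty := Finset.card_pos.mp (by omega)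
  have hσpos : 0 < σ := by
    rw [← hkey x₀]
    exact Finset.sum_pos (fun j hj => mul_pos (hμ j hj) (hx₀ j)) hAne
  have herase : ∀ k ∈ A, (A.erase k).card = d := by
    intro k hk
    rw [Finset.card_erase_of_mem hk, hA]
    omega
  have hsol : ∀ k, k ∈ A → ∃ p : EuclideanSpace ℝ (Fin d),
      ∀ j ∈ A.erase k, l j p = 0 := by
    intro k hk
    have hli := hind (A.erase k) (herase k hk)
    have hcard : Fintype.card (A.erase k) = d := by
      rw [Fintype.card_coe]
      exact herase k hk
    obtain ⟨-, hsurj⟩ := aux_span hd (fun j : (A.erase k) => n j) hcard hli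
    obtain ⟨p, hp⟩ := hsurj (fun j => -c (j : Fin (N + 1)))
    refine ⟨p, fun j hj => ?_⟩
    rw [hl]
    have h1 := hp ⟨j, hj⟩
    simp only at h1
    rw [h1]
    ring
  set q : Fin (N + 1) → EuclideanSpace ℝ (Fin d) := fun k =>
    if hk : k ∈ A then Classical.choose (hsol k hk) else 0 with hq
  have hq0 : ∀ k ∈ A, ∀ j ∈ A.erase k, l j (q k) = 0 := by
    intro k hk j hj
    show l j (if hk : k ∈ A then Classical.choose (hsol k hk) else 0) = 0
    rw [dif_pos hk]
    exact Classical.choose_spec (hsol k hk) j hj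
  have hqk : ∀ k ∈ A, l k (q k) = σ / μ k := by
    intro k hk
    have h1 := hkey (q k)
    rw [← Finset.add_sum_erase A _ hk] at h1
    have h2 : ∑ j ∈ A.erase k, μ j * l j (q k) = 0 := by
      apply Finset.sum_eq_zero
      intro j hj
      rw [hq0 k hk j hj, mul_zero]
    rw [h2, add_zero] at h1
    field_simp [(hμ k hk).ne']
    linarith [h1]
  have hqval : ∀ k ∈ A, ∀ j ∈ A, l j (q k) = if j = k then σ / μ k else 0 := by
    intro k hk j hj
    rcases eq_or_ne j k with rfl | hne
    · rw [if_pos rfl]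
      exact hqk j hj
    · rw [if_neg hne]
      exact hq0 k hk j (Finset.mem_erase.mpr ⟨hne, hj⟩)
  have hAcard : Fintype.card A = d + 1 := by rw [Fintype.card_coe, hA]
  set e : A ≃ Fin (d + 1) := Fintype.equivFinOfCardEq hAcard with he
  set p : Fin (d + 1) → EuclideanSpace ℝ (Fin d) :=
    fun m => q ((e.symm m) : Fin (N + 1)) with hp
  have hqpos : ∀ k ∈ A, 0 < l k (q k) := by
    intro k hk
    rw [hqk k hk]
    exact div_pos hσpos (hμ k hk)
  -- membership of the vertices
  have hvert : ∀ m : Fin (d + 1), ∀ j ∈ A, 0 ≤ l j (p m) := by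
    intro m j hj
    have hkA := (e.symm m).2
    rw [hp]
    show 0 ≤ l j (q ((e.symm m) : Fin (N + 1)))
    rw [hqval _ hkA j hj]
    by_cases hje : j = ((e.symm m) : Fin (N + 1))
    · rw [if_pos hje]
      exact (div_pos hσpos (hμ _ hkA)).le
    · rw [if_neg hje]
  -- convexity of S
  have hSconv : Convex ℝ {x : EuclideanSpace ℝ (Fin d) | ∀ i ∈ A, 0 ≤ l i x} := by
    intro x hx y hy a b ha hb hab
    intro j hj
    have hcomb : l j (a • x + b • y) = a * l j x + b * l j y := by
      rw [hl, hl, hl, inner_add_right, real_inner_smul_right, real_inner_smul_right]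
      linear_combination (c j : ℝ) * hab.symm
    rw [hcomb]
    have h1 := hx j hj
    have h2 := hy j hj
    nlinarith
  -- the injectivity tool
  obtain ⟨k₀, hk₀⟩ := hAne
  have hkerli := hind (A.erase k₀) (herase k₀ hk₀)
  have hkercard : Fintype.card (A.erase k₀) = d := by
    rw [Fintype.card_coe]
    exact herase k₀ hk₀
  obtain ⟨hker, -⟩ := aux_span hd (fun j : (A.erase k₀) => n j) hkercard hkerli
  -- S ⊆ hull
  have hSsub : {x : EuclideanSpace ℝ (Fin d) | ∀ i ∈ A, 0 ≤ l i x} ⊆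
      convexHull ℝ (Set.range p) := by
    intro x hx
    set w : Fin (d + 1) → ℝ :=
      fun m => μ ((e.symm m) : Fin (N + 1)) * l ((e.symm m) : Fin (N + 1)) x / σ with hw
    have hw0 : ∀ m, 0 ≤ w m := by
      intro m
      have hkA := (e.symm m).2
      exact div_nonneg (mul_nonneg (hμ _ hkA).le (hx _ hkA)) hσpos.le
    have hwsum : ∑ m, w m = 1 := by
      have h1 : ∑ m : Fin (d + 1), w m
          = ∑ k : A, μ (k : Fin (N + 1)) * l (k : Fin (N + 1)) x / σ :=
        Equiv.sum_comp e.symm (fun k : A => μ (k : Fin (N + 1)) * l (k : Fin (N + 1)) x / σ)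
      rw [h1, Finset.sum_coe_sort A (fun k => μ k * l k x / σ), ← Finset.sum_div,
        hkey x, div_self hσpos.ne']
    have hterm : ∀ (j : Fin (N + 1)) (hj : j ∈ A), ∀ m : Fin (d + 1),
        l j (p m) = if m = e ⟨j, hj⟩ then σ / μ j else 0 := by
      intro j hj m
      have hkA := (e.symm m).2
      rw [hp]
      show l j (q ((e.symm m) : Fin (N + 1))) = _
      rw [hqval _ hkA j hj]
      rcases eq_or_ne m (e ⟨j, hj⟩) with rfl | hne
      · rw [if_pos rfl, if_pos (by rw [Equiv.symm_apply_apply])]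
        congr 1
        rw [Equiv.symm_apply_apply]
      · rw [if_neg hne, if_neg ?_]
        intro hEq
        apply hne
        have : (⟨j, hj⟩ : A) = e.symm m := Subtype.ext hEq
        rw [this, Equiv.apply_symm_apply]
    have hinner : ∀ j ∈ A, ⟪n j, ∑ m, w m • p m⟫ = ⟪n j, x⟫ := by
      intro j hj
      rw [inner_sum]
      have h1 : ∀ m ∈ Finset.univ, ⟪n j, w m • p m⟫ = w m * l j (p m) - w m * c j := by
        intro m _
        rw [real_inner_smul_right]
        have h2 := hl j (p m)
        have h3 : ⟪n j, p m⟫ = l j (p m) - c j := by rw [h2]; ring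
        rw [h3]
        ring
      rw [Finset.sum_congr rfl h1, Finset.sum_sub_distrib, ← Finset.sum_mul, hwsum, one_mul]
      have h4 : ∑ m, w m * l j (p m) = w (e ⟨j, hj⟩) * (σ / μ j) := by
        rw [Finset.sum_eq_single (e ⟨j, hj⟩)]
        · rw [hterm j hj, if_pos rfl]
        · intro b _ hb
          rw [hterm j hj, if_neg hb, mul_zero]
        · intro h
          exact absurd (Finset.mem_univ _) h
      rw [h4]
      have h5 : w (e ⟨j, hj⟩) = μ j * l j x / σ := by
        rw [hw]
        show μ ((e.symm (e ⟨j, hj⟩)) : Fin (N + 1)) * l ((e.symm (e ⟨j, hj⟩)) : Fin (N + 1)) x / σ = _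
        rw [Equiv.symm_apply_apply]
      rw [h5]
      have h6 : ⟪n j, x⟫ = l j x - c j := by rw [hl j x]; ring
      rw [h6]
      field_simp [(hμ j hj).ne']
    have hyx : ∑ m, w m • p m = x := by
      have hdiff : ∀ j : (A.erase k₀),
          ⟪n (j : Fin (N + 1)), (∑ m, w m • p m) - x⟫ = 0 := by
        intro j
        have hjA : (j : Fin (N + 1)) ∈ A := Finset.mem_of_mem_erase j.2
        rw [inner_sub_right, hinner _ hjA, sub_self]
      have := hker ((∑ m, w m • p m) - x) hdiff
      rwa [sub_eq_zero] at this
    rw [← hyx, ← Finset.centerMass_eq_of_sum_1 Finset.univ p hwsum]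
    exact Finset.centerMass_mem_convexHull Finset.univ (fun m _ => hw0 m)
      (by rw [hwsum]; norm_num) (fun m _ => Set.mem_range_self m)
  -- hull ⊆ S
  have hhull : convexHull ℝ (Set.range p) ⊆
      {x : EuclideanSpace ℝ (Fin d) | ∀ i ∈ A, 0 ≤ l i x} := by
    apply convexHull_min _ hSconv
    rintro x ⟨m, rfl⟩
    intro j hj
    exact hvert m j hj
  -- affine independence
  have haff : AffineIndependent ℝ p := by
    rw [affineIndependent_iff]
    intro s w hs0 hsp m hm
    set j : A := e.symm m with hj
    have hjA := j.2
    have h0 : ⟪n (j : Fin (N + 1)), ∑ m' ∈ s, w m' • p m'⟫ = 0 := by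
      rw [hsp, inner_zero_right]
    rw [inner_sum] at h0
    have h1 : ∀ m' ∈ s, ⟪n (j : Fin (N + 1)), w m' • p m'⟫
        = w m' * l (j : Fin (N + 1)) (p m') - w m' * c (j : Fin (N + 1)) := by
      intro m' _
      rw [real_inner_smul_right]
      have h2 := hl (j : Fin (N + 1)) (p m')
      have h3 : ⟪n (j : Fin (N + 1)), p m'⟫ = l (j : Fin (N + 1)) (p m') - c (j : Fin (N + 1)) := by
        rw [h2]; ring
      rw [h3]
      ring
    rw [Finset.sum_congr rfl h1, Finset.sum_sub_distrib, ← Finset.sum_mul, hs0,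
      zero_mul, sub_zero] at h0
    have hterm : ∀ m' : Fin (d + 1),
        l (j : Fin (N + 1)) (p m') = if m' = m then σ / μ (j : Fin (N + 1)) else 0 := by
      intro m'
      have hkA := (e.symm m').2
      rw [hp]
      show l (j : Fin (N + 1)) (q ((e.symm m') : Fin (N + 1))) = _
      rw [hqval _ hkA _ hjA]
      rcases eq_or_ne m' m with rfl | hne
      · rw [if_pos rfl, if_pos rfl]
      · rw [if_neg hne, if_neg ?_]
        intro hEq
        apply hne
        have : j = e.symm m' := Subtype.ext hEq
        rw [hj] at this
        exact (e.symm.injective this).symm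
    rw [Finset.sum_eq_single m (fun b _ hb => by rw [hterm b, if_neg hb, mul_zero])
      (fun h => absurd hm h)] at h0
    rw [hterm m, if_pos rfl] at h0
    have hσμ : σ / μ (j : Fin (N + 1)) ≠ 0 := (div_pos hσpos (hμ _ hjA)).ne'
    exact (mul_eq_zero.mp h0).resolve_right hσμ
  exact ⟨p, haff, Set.Subset.antisymm hSsub hhull⟩

/-- Theorem 3.8: a compact convex polytope whose face normals are in general
position is the intersection of at most `C(N+1, d+1)` supporting `d`-dimensional
simplices, each cut out by `d+1` of the defining affine functions. -/
theorem stmt_10 (d N : ℕ) (hd : 1 ≤ d) (hN : d ≤ N)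
    (n : Fin (N + 1) → EuclideanSpace ℝ (Fin d)) (hn : ∀ i, n i ≠ 0)
    (c : Fin (N + 1) → ℝ)
    (l : Fin (N + 1) → EuclideanSpace ℝ (Fin d) → ℝ)
    (hl : ∀ i x, l i x = ⟪n i, x⟫ + c i)
    (K : Set (EuclideanSpace ℝ (Fin d)))
    (hK : K = {x : EuclideanSpace ℝ (Fin d) | ∀ i, 0 ≤ l i x})
    (hKcomp : IsCompact K) (hKint : (interior K).Nonempty)
    (hmeet : ∀ i, ∃ x ∈ K, l i x = 0)
    (hind : ∀ s : Finset (Fin (N + 1)), s.card = d →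
      LinearIndependent ℝ (fun i : s => n i)) :
    ∃ 𝒜 : Finset (Finset (Fin (N + 1))),
      𝒜.Nonempty ∧
      (∀ A ∈ 𝒜, A.card = d + 1) ∧
      𝒜.card ≤ (N + 1).choose (d + 1) ∧
      (∀ A ∈ 𝒜,
        K ⊆ {x : EuclideanSpace ℝ (Fin d) | ∀ i ∈ A, 0 ≤ l i x} ∧
        ∃ p : Fin (d + 1) → EuclideanSpace ℝ (Fin d),
          AffineIndependent ℝ p ∧
          {x : EuclideanSpace ℝ (Fin d) | ∀ i ∈ A, 0 ≤ l i x} =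
            convexHull ℝ (Set.range p)) ∧
      K = ⋂ A ∈ 𝒜, {x : EuclideanSpace ℝ (Fin d) | ∀ i ∈ A, 0 ≤ l i x} := by
  classical
  obtain ⟨x₀, hx₀int⟩ := hKint
  have hx₀K : x₀ ∈ K := interior_subset hx₀int
  have hx₀ : ∀ i, 0 < l i x₀ := by
    intro i
    obtain ⟨ε, hε, hball⟩ := Metric.isOpen_iff.mp isOpen_interior x₀ hx₀int
    have hni : 0 < ‖n i‖ := norm_pos_iff.mpr (hn i)
    set y := x₀ - (ε / 2 / ‖n i‖) • n i with hy
    have hymem : y ∈ K := by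
      apply interior_subset; apply hball
      rw [Metric.mem_ball, dist_eq_norm, hy]
      have : x₀ - (ε / 2 / ‖n i‖) • n i - x₀ = -((ε / 2 / ‖n i‖) • n i) := by abel
      rw [this, norm_neg, norm_smul, Real.norm_eq_abs,
        abs_of_pos (by positivity), div_mul_cancel₀ _ hni.ne']
      linarith
    have h0 : 0 ≤ l i y := by rw [hK] at hymem; exact hymem i
    have hcalc : l i y = l i x₀ - ε / 2 * ‖n i‖ := by
      rw [hl, hl, hy, inner_sub_right, real_inner_smul_right,
        real_inner_self_eq_norm_sq]
      field_simp
      ring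
    nlinarith
  have hrec : ∀ y : EuclideanSpace ℝ (Fin d), (∀ j, 0 ≤ ⟪n j, y⟫) → y = 0 := by
    intro y hy
    by_contra hy0
    obtain ⟨R, hR⟩ := hKcomp.isBounded.subset_closedBall 0
    have hray : ∀ t : ℝ, 0 ≤ t → x₀ + t • y ∈ K := by
      intro t ht
      rw [hK]; intro j
      rw [hl, inner_add_right, real_inner_smul_right]
      have h1 : 0 ≤ l j x₀ := (hx₀ j).le
      rw [hl] at h1
      nlinarith [hy j]
    have hyn : 0 < ‖y‖ := norm_pos_iff.mpr hy0
    set t := (R + ‖x₀‖ + 1) / ‖y‖ with ht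
    have htpos : 0 ≤ t := by
      have hRpos : 0 ≤ R := by
        have := hR hx₀K
        rw [Metric.mem_closedBall, dist_zero_right] at this
        linarith [norm_nonneg x₀]
      rw [ht]
      apply div_nonneg _ hyn.le
      linarith [norm_nonneg x₀]
    have hmem := hR (hray t htpos)
    rw [Metric.mem_closedBall, dist_zero_right] at hmem
    have h1 : ‖t • y‖ ≤ ‖x₀ + t • y‖ + ‖x₀‖ := by
      have h2 := norm_sub_le (x₀ + t • y) x₀
      have h3 : x₀ + t • y - x₀ = t • y := by abel
      rw [h3] at h2
      linarith
    have h4 : ‖t • y‖ = t * ‖y‖ := by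
      rw [norm_smul, Real.norm_eq_abs, abs_of_nonneg htpos]
    have h5 : t * ‖y‖ = R + ‖x₀‖ + 1 := by
      rw [ht, div_mul_cancel₀ _ hyn.ne']
    nlinarith
  set S : Finset (Fin (N + 1)) → Set (EuclideanSpace ℝ (Fin d)) :=
    fun A => {x : EuclideanSpace ℝ (Fin d) | ∀ i ∈ A, 0 ≤ l i x} with hS
  have hEX : ∀ i : Fin (N + 1), ∃ A : Finset (Fin (N + 1)), i ∈ A ∧ A.card = d + 1 ∧
      K ⊆ S A ∧ ∃ p : Fin (d + 1) → EuclideanSpace ℝ (Fin d),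
        AffineIndependent ℝ p ∧ S A = convexHull ℝ (Set.range p) := by
    intro i
    obtain ⟨lam, hlam0, hlami, hlamsum⟩ := aux_cone hd n hn hrec i
    obtain ⟨A, μ, hiA, hcard, hμ, hrel⟩ :=
      aux_reduce hN n hind Finset.univ lam i (Finset.mem_univ i)
        (fun j _ => hlam0 j) hlami hlamsum
    have hKsub : K ⊆ S A := by
      rw [hK]; intro x hx j _; exact hx j
    obtain ⟨p, hp1, hp2⟩ := aux_simplex hd n c l hl hind x₀ hx₀ A hcard μ hμ hrel
    exact ⟨A, hiA, hcard, hKsub, p, hp1, hp2⟩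
  set 𝒜 : Finset (Finset (Fin (N + 1))) :=
    (Finset.powersetCard (d + 1) Finset.univ).filter
      (fun A => K ⊆ S A ∧ ∃ p : Fin (d + 1) → EuclideanSpace ℝ (Fin d),
        AffineIndependent ℝ p ∧ S A = convexHull ℝ (Set.range p)) with h𝒜
  have hmem𝒜 : ∀ i : Fin (N + 1), ∃ A ∈ 𝒜, i ∈ A := by
    intro i
    obtain ⟨A, hiA, hcard, hsub, hp⟩ := hEX i
    refine ⟨A, ?_, hiA⟩
    rw [h𝒜, Finset.mem_filter, Finset.mem_powersetCard]
    exact ⟨⟨Finset.subset_univ A, hcard⟩, hsub, hp⟩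
  obtain ⟨A₀, hA₀, _⟩ := hmem𝒜 0
  refine ⟨𝒜, ⟨A₀, hA₀⟩, ?_, ?_, ?_, ?_⟩
  · intro A hA
    rw [h𝒜, Finset.mem_filter, Finset.mem_powersetCard] at hA
    exact hA.1.2
  · calc 𝒜.card ≤ (Finset.powersetCard (d + 1) (Finset.univ : Finset (Fin (N + 1)))).card :=
        Finset.card_filter_le _ _
      _ = (N + 1).choose (d + 1) := by
        rw [Finset.card_powersetCard, Finset.card_univ, Fintype.card_fin]
  · intro A hA
    rw [h𝒜, Finset.mem_filter] at hA
    exact hA.2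
  · ext x
    constructor
    · intro hx
      rw [Set.mem_iInter₂]
      intro A hA
      rw [h𝒜, Finset.mem_filter] at hA
      exact hA.2.1 hx
    · intro hx
      rw [Set.mem_iInter₂] at hx
      rw [hK]
      intro i
      obtain ⟨A, hA𝒜, hiA⟩ := hmem𝒜 i
      exact hx A hA𝒜 i hiA
end

section
/- Let K ⊆ ℝ^d be a nonempty compact convex set and let l₀, …, l_d be affine functions on ℝ^d such that for each i: l_i ≥ 0 on K and the hyperplane H_i = {l_i = 0} meets K. Suppose S := {x ∈ ℝ^d : l_i(x) ≥ 0 for all i = 0, …, d} is a d-dimensional simplex (so K ⊆ S). Then for every nonzero vector b ∈ ℝ^d, the translate b + K is not contained in S; that is, there exists y ∈ K with y + b ∉ S. -/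
open scoped RealInnerProductSpace

/-- Lemma 3.9: a supporting simplex `S ⊇ K` is minimal: no nonzero translate of
`K` stays inside `S`. -/
theorem stmt_11 (d : ℕ) (hd : 1 ≤ d)
    (K : Set (EuclideanSpace ℝ (Fin d)))
    (hKne : K.Nonempty) (hKcomp : IsCompact K) (hKconv : Convex ℝ K)
    (n : Fin (d + 1) → EuclideanSpace ℝ (Fin d)) (hn : ∀ i, n i ≠ 0)
    (c : Fin (d + 1) → ℝ)
    (l : Fin (d + 1) → EuclideanSpace ℝ (Fin d) → ℝ)
    (hl : ∀ i x, l i x = ⟪n i, x⟫ + c i)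
    (hKpos : ∀ i, ∀ x ∈ K, 0 ≤ l i x)
    (hmeet : ∀ i, ∃ x ∈ K, l i x = 0)
    (hsimplex : ∃ p : Fin (d + 1) → EuclideanSpace ℝ (Fin d),
      AffineIndependent ℝ p ∧
      {x : EuclideanSpace ℝ (Fin d) | ∀ i, 0 ≤ l i x} = convexHull ℝ (Set.range p)) :
    ∀ b : EuclideanSpace ℝ (Fin d), b ≠ 0 →
      ∃ y ∈ K, y + b ∉ {x : EuclideanSpace ℝ (Fin d) | ∀ i, 0 ≤ l i x} := by
  intro b hb
  -- first show some ⟪n i, b⟫ < 0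
  have hkey : ∃ i, ⟪n i, b⟫ < 0 := by
    by_contra h
    push_neg at h
    obtain ⟨p, hp, hS⟩ := hsimplex
    -- S is bounded
    have hSb : Bornology.IsBounded {x : EuclideanSpace ℝ (Fin d) | ∀ i, 0 ≤ l i x} := by
      rw [hS]
      exact ((Set.finite_range p).isCompact_convexHull (𝕜 := ℝ)).isBounded
    obtain ⟨x₀, hx₀⟩ := hKne
    have hx₀S : ∀ t : ℝ, 0 ≤ t → (x₀ + t • b) ∈ {x : EuclideanSpace ℝ (Fin d) | ∀ i, 0 ≤ l i x} := by
      intro t ht i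
      have : l i (x₀ + t • b) = l i x₀ + t * ⟪n i, b⟫ := by
        simp [hl, inner_add_right, inner_smul_right]; ring
      rw [this]
      have := hKpos i x₀ hx₀
      nlinarith [h i]
    obtain ⟨R, hR⟩ := hSb.exists_norm_le
    have hbpos : (0:ℝ) < ‖b‖ := norm_pos_iff.mpr hb
    set t : ℝ := (R + ‖x₀‖ + 1) / ‖b‖ with ht
    have ht0 : 0 ≤ t := by
      have hR0 : 0 ≤ R := le_trans (norm_nonneg x₀) (hR x₀ (by simpa using hx₀S 0 le_rfl))
      positivity
    have h1 := hR _ (hx₀S t ht0)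
    have h2 : ‖t • b‖ ≤ ‖x₀ + t • b‖ + ‖x₀‖ := by
      have := norm_sub_le (x₀ + t • b) x₀
      simpa [add_sub_cancel_left] using this
    have h3 : ‖t • b‖ = t * ‖b‖ := by rw [norm_smul, Real.norm_of_nonneg ht0]
    have h4 : t * ‖b‖ = R + ‖x₀‖ + 1 := by rw [ht, div_mul_cancel₀ _ hbpos.ne']
    have : R + ‖x₀‖ + 1 ≤ R + ‖x₀‖ := by
      calc R + ‖x₀‖ + 1 = ‖t • b‖ := by rw [h3, h4]
        _ ≤ ‖x₀ + t • b‖ + ‖x₀‖ := h2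
        _ ≤ R + ‖x₀‖ := by linarith
    linarith
  obtain ⟨i, hi⟩ := hkey
  obtain ⟨y, hyK, hy0⟩ := hmeet i
  refine ⟨y, hyK, fun hmem => ?_⟩
  have h5 := hmem i
  have h6 : l i (y + b) = l i y + ⟪n i, b⟫ := by
    simp [hl, inner_add_right]; ring
  rw [h6, hy0, zero_add] at h5
  linarith
end

section
/- Let K = {x ∈ ℝ^d : l_i(x) ≥ 0 for all i ∈ I} be a compact set with nonempty interior, where I is a finite index set and each l_i(x) = ⟨n_i, x⟩ + c_i is an affine function whose hyperplane H_i = {l_i = 0} meets K. Let E = {a₁ + (cos θ)·a₂ + (sin θ)·a₃ : θ ∈ ℝ} ⊆ K be an ellipse (a₁, a₂, a₃ ∈ ℝ^d) that is inscribed in K, i.e., for every v ∈ ℝ^d the translate v + E is not contained in the interior of K. Then there exists a subset A ⊆ I such that the set S := {x ∈ ℝ^d : l_i(x) ≥ 0 for all i ∈ A} contains K, S is either a d-dimensional simplex or a strip whose orthogonal cross-section is a simplex (i.e., S = {x : π_V(x) ∈ Σ} for some linear subspace V of dimension j, 1 ≤ j < d, with π_V the orthogonal projection onto V and Σ the convex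 hull of j+1 affinely independent points of V), and E is inscribed in S: for every v ∈ ℝ^d, the translate v + E is not contained in the interior of S. -/
open scoped RealInnerProductSpace
open Module

lemma simplex_lemma {W : Type*} [NormedAddCommGroup W] [InnerProductSpace ℝ W]
    [FiniteDimensional ℝ W] {j : ℕ} (hW : Module.finrank ℝ W = j)
    (w : Fin (j+1) → W) (lam b : Fin (j+1) → ℝ)
    (hlam : ∀ k, 0 < lam k) (hsum : ∑ k, lam k = 1)
    (hzero : ∑ k, lam k • w k = 0) (hai : AffineIndependent ℝ w)
    (hb : 0 < ∑ k, lam k * b k) :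
    ∃ q : Fin (j+1) → W, AffineIndependent ℝ q ∧
      {y : W | ∀ k, 0 ≤ ⟪w k, y⟫ + b k} = convexHull ℝ (Set.range q) := by
  classical
  set β := ∑ k, lam k * b k with hβ
  -- span of the range of w is ⊤
  have hvs : vectorSpan ℝ (Set.range w) ≤ Submodule.span ℝ (Set.range w) := by
    rw [vectorSpan_def]
    apply Submodule.span_le.2
    rintro x ⟨u, hu, v, hv, rfl⟩
    exact sub_mem (Submodule.subset_span hu) (Submodule.subset_span hv)
  have hfr : finrank ℝ (vectorSpan ℝ (Set.range w)) = j :=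
    hai.finrank_vectorSpan (by simp)
  have hvstop : vectorSpan ℝ (Set.range w) = ⊤ :=
    Submodule.eq_top_of_finrank_eq (by rw [hfr, hW])
  have hspan : Submodule.span ℝ (Set.range w) = ⊤ :=
    top_unique (hvstop ▸ hvs)
  -- linear map L
  set L : W →ₗ[ℝ] (Fin (j+1) → ℝ) :=
    LinearMap.pi (fun k => ((innerSL ℝ (w k)).toLinearMap)) with hL
  have hLapp : ∀ y k, L y k = ⟪w k, y⟫ := fun y k => rfl
  have hLinj : Function.Injective L := by
    rw [← LinearMap.ker_eq_bot]
    rw [Submodule.eq_bot_iff]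
    intro y hy
    have hy' : ∀ k, ⟪w k, y⟫ = 0 := fun k => congrFun (LinearMap.mem_ker.1 hy) k
    have hall : ∀ u ∈ Submodule.span ℝ (Set.range w), ⟪u, y⟫ = 0 := by
      intro u hu
      induction hu using Submodule.span_induction with
      | mem x hx => obtain ⟨k, rfl⟩ := hx; exact hy' k
      | zero => simp
      | add x z _ _ hx hz => rw [inner_add_left, hx, hz]; ring
      | smul a x _ hx => rw [real_inner_smul_left, hx]; ring
    have := hall y (hspan ▸ Submodule.mem_top)
    exact inner_self_eq_zero.1 this
  -- the functional f
  set f : (Fin (j+1) → ℝ) →ₗ[ℝ] ℝ :=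
    ∑ k, lam k • LinearMap.proj k with hf
  have hfapp : ∀ t, f t = ∑ k, lam k * t k := by
    intro t; simp [hf, LinearMap.sum_apply]
  have hfsurj : Function.Surjective f := by
    intro r
    exact ⟨fun _ => r, by rw [hfapp]; rw [← Finset.sum_mul, hsum]; ring⟩
  set P := LinearMap.ker f with hP
  have hPfr : finrank ℝ P = j := by
    rw [hP]
    have h1 := LinearMap.finrank_range_add_finrank_ker f
    rw [LinearMap.range_eq_top.2 hfsurj] at h1
    simp only [finrank_top, finrank_self, Module.finrank_fin_fun] at h1
    omega
  have hLP : ∀ y, L y ∈ P := by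
    intro y
    rw [hP, LinearMap.mem_ker, hfapp]
    have : ∀ k, lam k * (L y k) = ⟪lam k • w k, y⟫ := by
      intro k; rw [real_inner_smul_left, hLapp]
    rw [Finset.sum_congr rfl (fun k _ => this k), ← sum_inner, hzero, inner_zero_left]
  set L' : W →ₗ[ℝ] P := L.codRestrict P hLP with hL'
  have hL'inj : Function.Injective L' := by
    intro x y hxy
    apply hLinj
    have := congrArg (Subtype.val) hxy
    exact this
  have hL'surj : Function.Surjective L' := by
    rw [← LinearMap.range_eq_top]
    apply Submodule.eq_top_of_finrank_eq
    rw [LinearMap.finrank_range_of_inj hL'inj, hW, hPfr]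
  set eL : W ≃ₗ[ℝ] P := LinearEquiv.ofBijective L' ⟨hL'inj, hL'surj⟩ with heL
  -- target vectors
  set tk : Fin (j+1) → (Fin (j+1) → ℝ) :=
    fun k m => -b m + (if m = k then β / lam k else 0) with htk
  have htkP : ∀ k, tk k ∈ P := by
    intro k
    rw [hP, LinearMap.mem_ker, hfapp]
    have : ∀ m, lam m * tk k m = -(lam m * b m) + (if m = k then β else 0) := by
      intro m
      rcases eq_or_ne m k with rfl | hmk
      · simp [htk]
        field_simp [(hlam m).ne']
      · simp [htk, hmk]
    rw [Finset.sum_congr rfl (fun m _ => this m), Finset.sum_add_distrib]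
    simp [hβ, Finset.sum_ite_eq']
  set q : Fin (j+1) → W := fun k => eL.symm ⟨tk k, htkP k⟩ with hq
  have hLq : ∀ k, L (q k) = tk k := by
    intro k
    have : L' (q k) = ⟨tk k, htkP k⟩ := by
      show eL (q k) = _
      simp [hq]
    exact congrArg Subtype.val this
  have key : ∀ k m, ⟪w m, q k⟫ = -b m + (if m = k then β / lam k else 0) := by
    intro k m
    rw [← hLapp, hLq]
  have hβlam : ∀ k, 0 < β / lam k := fun k => div_pos hb (hlam k)
  -- each q k lies in the set S
  have hqS : ∀ k m, 0 ≤ ⟪w m, q k⟫ + b m := by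
    intro k m
    rw [key]
    split_ifs with h
    · linarith [hβlam k]
    · linarith
  refine ⟨q, ?_, ?_⟩
  · -- affine independence of q
    rw [affineIndependent_iff]
    intro s wt hs0 hsum0 e he
    have happ : ∀ m, (0:ℝ) = ∑ i ∈ s, wt i * ⟪w m, q i⟫ := by
      intro m
      have := congrArg (fun y => ⟪w m, y⟫) hsum0
      simp only [inner_zero_right] at this
      rw [← this, inner_sum]
      exact Finset.sum_congr rfl (fun i _ => by rw [real_inner_smul_right])
    have h2 := happ e
    have h3 : ∀ i ∈ s, wt i * ⟪w e, q i⟫ = wt i * (-b e) + wt i * (if e = i then β / lam i else 0) := by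
      intro i _
      rw [key]
      ring
    rw [Finset.sum_congr rfl h3, Finset.sum_add_distrib, ← Finset.sum_mul, hs0] at h2
    simp only [mul_ite, mul_zero] at h2
    rw [Finset.sum_ite_eq s e (fun i => wt i * (β / lam i))] at h2
    simp [he] at h2
    rcases h2 with h2 | h2
    · exact h2
    · rcases h2 with h2 | h2
      · exact absurd h2 (ne_of_gt hb)
      · exact absurd h2 (ne_of_gt (hlam e))
  · -- set equality
    apply Set.Subset.antisymm
    · intro y hy
      simp only [Set.mem_setOf_eq] at hy
      set μ : Fin (j+1) → ℝ := fun k => lam k * (⟪w k, y⟫ + b k) / β with hμ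
      have hμ0 : ∀ k, 0 ≤ μ k := by
        intro k
        apply div_nonneg _ (le_of_lt hb)
        exact mul_nonneg (le_of_lt (hlam k)) (hy k)
      have hlamy : ∑ k, lam k * ⟪w k, y⟫ = 0 := by
        have : ∀ k, lam k * ⟪w k, y⟫ = ⟪lam k • w k, y⟫ := by
          intro k; rw [real_inner_smul_left]
        rw [Finset.sum_congr rfl (fun k _ => this k), ← sum_inner, hzero, inner_zero_left]
      have hβ0 : β ≠ 0 := ne_of_gt hb
      have hμsum : ∑ k, μ k = 1 := by
        have e1 : ∀ k : Fin (j+1), μ k = (lam k * ⟪w k, y⟫ + lam k * b k) / β := by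
          intro k
          show lam k * (⟪w k, y⟫ + b k) / β = _
          ring
        rw [Finset.sum_congr rfl (fun k _ => e1 k), ← Finset.sum_div,
          Finset.sum_add_distrib, hlamy, zero_add]
        exact div_self hβ0
      have hrep : y = ∑ k, μ k • q k := by
        apply hLinj
        rw [map_sum]
        funext m
        simp only [Finset.sum_apply, hLapp]
        have h5 : ∀ k : Fin (j+1), ⟪w m, μ k • q k⟫ = μ k * ⟪w m, q k⟫ :=
          fun k => real_inner_smul_right _ _ _
        rw [Finset.sum_congr rfl (fun k _ => h5 k)]
        have h4 : ∀ k, μ k * ⟪w m, q k⟫ = μ k * (-b m) + μ k * (if m = k then β / lam k else 0) := by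
          intro k; rw [key]; ring
        rw [Finset.sum_congr rfl (fun k _ => h4 k), Finset.sum_add_distrib,
          ← Finset.sum_mul, hμsum]
        simp only [mul_ite, mul_zero]
        rw [Finset.sum_ite_eq Finset.univ m (fun k => μ k * (β / lam k))]
        simp only [Finset.mem_univ, if_pos]
        have hlm : lam m ≠ 0 := (hlam m).ne'
        have h6 : μ m * (β / lam m) = ⟪w m, y⟫ + b m := by
          show lam m * (⟪w m, y⟫ + b m) / β * (β / lam m) = _
          field_simp
        rw [h6]; ring
      rw [hrep]
      exact (convex_convexHull ℝ _).sum_mem (fun k _ => hμ0 k) hμsum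
        (fun k _ => subset_convexHull ℝ _ (Set.mem_range_self k))
    · apply convexHull_min
      · rintro y ⟨k, rfl⟩
        exact fun m => hqS k m
      · intro x hx y hy a bb ha hb' hab
        intro k
        have : ⟪w k, a • x + bb • y⟫ = a * ⟪w k, x⟫ + bb * ⟪w k, y⟫ := by
          rw [inner_add_right, real_inner_smul_right, real_inner_smul_right]
        rw [this]
        have e1 : 0 ≤ a * (⟪w k, x⟫ + b k) := mul_nonneg ha (hx k)
        have e2 : 0 ≤ bb * (⟪w k, y⟫ + b k) := mul_nonneg hb' (hy k)
        have e3 : a * (⟪w k, x⟫ + b k) + bb * (⟪w k, y⟫ + b k) =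
            a * ⟪w k, x⟫ + bb * ⟪w k, y⟫ + (a + bb) * b k := by ring
        rw [hab] at e3
        linarith


lemma trig_min (B C : ℝ) :
    (∀ θ : ℝ, -Real.sqrt (B^2+C^2) ≤ Real.cos θ * B + Real.sin θ * C) ∧
    (∃ θ : ℝ, Real.cos θ * B + Real.sin θ * C = -Real.sqrt (B^2+C^2)) := by
  have hnn : (0:ℝ) ≤ B^2 + C^2 := by positivity
  constructor
  · intro θ
    have h1 : (Real.cos θ * B + Real.sin θ * C)^2 ≤ B^2 + C^2 := by
      have hc := Real.sin_sq_add_cos_sq θ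
      nlinarith [sq_nonneg (Real.cos θ * C - Real.sin θ * B)]
    have h2 : |Real.cos θ * B + Real.sin θ * C| ≤ Real.sqrt (B^2 + C^2) := by
      rw [← Real.sqrt_sq_eq_abs]
      exact Real.sqrt_le_sqrt h1
    have := neg_abs_le (Real.cos θ * B + Real.sin θ * C)
    linarith [neg_le_neg h2]
  · rcases eq_or_lt_of_le hnn with h0 | hpos
    · refine ⟨0, ?_⟩
      have hB : B = 0 := by nlinarith
      have hC : C = 0 := by nlinarith
      simp [hB, hC]
    · set r := Real.sqrt (B^2 + C^2) with hr
      have hrpos : 0 < r := Real.sqrt_pos.2 hpos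
      set z : ℂ := Complex.mk (-B) (-C) with hz
      have habs : ‖z‖ = r := by
        rw [Complex.norm_def, Complex.normSq_mk]
        rw [hr]
        congr 1
        ring
      have hz0 : z ≠ 0 := by
        intro h
        rw [h] at habs
        simp at habs
        linarith [habs ▸ hrpos]
      refine ⟨z.arg, ?_⟩
      rw [Complex.cos_arg hz0, Complex.sin_arg z, habs]
      have : z.re = -B := rfl
      rw [this]
      have : z.im = -C := rfl
      rw [this]
      have hr2 : r^2 = B^2 + C^2 := Real.sq_sqrt hnn
      field_simp
      nlinarith


set_option maxHeartbeats 1000000 in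
/-- Proposition 5.2: an ellipse inscribed in a compact convex polytope `K` is
inscribed in some supporting simplex or strip of `K`. -/
theorem stmt_16 (d : ℕ) (hd : 1 ≤ d)
    (ι : Type) [Fintype ι]
    (n : ι → EuclideanSpace ℝ (Fin d)) (hn : ∀ i, n i ≠ 0)
    (c : ι → ℝ)
    (l : ι → EuclideanSpace ℝ (Fin d) → ℝ)
    (hl : ∀ i x, l i x = ⟪n i, x⟫ + c i)
    (K : Set (EuclideanSpace ℝ (Fin d)))
    (hK : K = {x : EuclideanSpace ℝ (Fin d) | ∀ i, 0 ≤ l i x})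
    (hKcomp : IsCompact K) (hKint : (interior K).Nonempty)
    (hmeet : ∀ i, ∃ x ∈ K, l i x = 0)
    (a₁ a₂ a₃ : EuclideanSpace ℝ (Fin d))
    (Ell : Set (EuclideanSpace ℝ (Fin d)))
    (hEll : Ell = Set.range (fun θ : ℝ => a₁ + Real.cos θ • a₂ + Real.sin θ • a₃))
    (hEllK : Ell ⊆ K)
    (hinsc : ∀ v : EuclideanSpace ℝ (Fin d),
      ¬ ((fun e => v + e) '' Ell ⊆ interior K)) :
    ∃ A : Finset ι,
      K ⊆ {x : EuclideanSpace ℝ (Fin d) | ∀ i ∈ A, 0 ≤ l i x} ∧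
      ((∃ p : Fin (d + 1) → EuclideanSpace ℝ (Fin d),
          AffineIndependent ℝ p ∧
          {x : EuclideanSpace ℝ (Fin d) | ∀ i ∈ A, 0 ≤ l i x} =
            convexHull ℝ (Set.range p)) ∨
        (∃ (j : ℕ) (_ : 1 ≤ j) (_ : j < d)
            (V : Submodule ℝ (EuclideanSpace ℝ (Fin d)))
            (q : Fin (j + 1) → V),
          Module.finrank ℝ V = j ∧
          AffineIndependent ℝ q ∧
          {x : EuclideanSpace ℝ (Fin d) | ∀ i ∈ A, 0 ≤ l i x} =
            {x : EuclideanSpace ℝ (Fin d) |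
              Submodule.orthogonalProjectionOnto V x ∈ convexHull ℝ (Set.range q)})) ∧
      (∀ v : EuclideanSpace ℝ (Fin d),
        ¬ ((fun e => v + e) '' Ell ⊆
          interior {x : EuclideanSpace ℝ (Fin d) | ∀ i ∈ A, 0 ≤ l i x})) := by
  classical
  -- the minimum of l i over the ellipse
  obtain ⟨m, hm⟩ : ∃ m : ι → ℝ,
      m = fun i => ⟪n i, a₁⟫ + c i - Real.sqrt (⟪n i, a₂⟫^2 + ⟪n i, a₃⟫^2) := ⟨_, rfl⟩
  have hinner : ∀ (i : ι) (θ : ℝ),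
      l i (a₁ + Real.cos θ • a₂ + Real.sin θ • a₃) =
        (⟪n i, a₁⟫ + c i) + (Real.cos θ * ⟪n i, a₂⟫ + Real.sin θ * ⟪n i, a₃⟫) := by
    intro i θ
    rw [hl, inner_add_right, inner_add_right, real_inner_smul_right, real_inner_smul_right]
    ring
  have hmle : ∀ i, ∀ e ∈ Ell, m i ≤ l i e := by
    intro i e he
    rw [hEll] at he
    obtain ⟨θ, rfl⟩ := he
    rw [hinner]
    have := (trig_min ⟪n i, a₂⟫ ⟪n i, a₃⟫).1 θ
    simp only [hm]
    linarith
  have hmex : ∀ i, ∃ e ∈ Ell, l i e = m i := by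
    intro i
    obtain ⟨θ, hθ⟩ := (trig_min ⟪n i, a₂⟫ ⟪n i, a₃⟫).2
    refine ⟨a₁ + Real.cos θ • a₂ + Real.sin θ • a₃, by rw [hEll]; exact Set.mem_range_self θ, ?_⟩
    rw [hinner, hθ]
    simp only [hm]
    ring
  have hm0 : ∀ i, 0 ≤ m i := by
    intro i
    obtain ⟨e, heE, heq⟩ := hmex i
    have := hEllK heE
    rw [hK] at this
    exact heq ▸ this i
  have hcont : ∀ i, Continuous (l i) := by
    intro i
    have : l i = fun x => ⟪n i, x⟫ + c i := funext (hl i)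
    rw [this]
    exact (continuous_const.inner continuous_id).add continuous_const
  -- strict positivity inside the interior of any such polyhedral set
  have hstrict : ∀ (A : Finset ι) (x : (EuclideanSpace ℝ (Fin d))),
      x ∈ interior {y : (EuclideanSpace ℝ (Fin d)) | ∀ i ∈ A, 0 ≤ l i y} → ∀ i ∈ A, 0 < l i x := by
    intro A x hx i hi
    obtain ⟨ε, hε, hball⟩ := Metric.isOpen_iff.1 isOpen_interior x hx
    have hni : (0:ℝ) < ‖n i‖ := norm_pos_iff.2 (hn i)
    set δ : ℝ := ε / (2 * ‖n i‖) with hδdef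
    have hδ : 0 < δ := by positivity
    have hmem : x - δ • n i ∈ Metric.ball x ε := by
      rw [Metric.mem_ball, dist_eq_norm]
      have : x - δ • n i - x = -(δ • n i) := by abel
      rw [this, norm_neg, norm_smul, Real.norm_eq_abs, abs_of_pos hδ, hδdef]
      have hne : ‖n i‖ ≠ 0 := ne_of_gt hni
      have h7 : ε / (2 * ‖n i‖) * ‖n i‖ = ε / 2 := by
        field_simp
      rw [h7]
      linarith
    have h0 : 0 ≤ l i (x - δ • n i) := (interior_subset (hball hmem)) i hi
    rw [hl] at h0 ⊢
    rw [inner_sub_right, real_inner_smul_right] at h0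
    have hself : (0:ℝ) < ⟪n i, n i⟫ := by
      have h8 : ‖n i‖ > 0 := hni
      rw [real_inner_self_eq_norm_sq]
      positivity
    nlinarith
  have hopen : ∀ A : Finset ι, IsOpen {x : (EuclideanSpace ℝ (Fin d)) | ∀ i ∈ A, 0 < l i x} := by
    intro A
    have : {x : (EuclideanSpace ℝ (Fin d)) | ∀ i ∈ A, 0 < l i x} = ⋂ i ∈ A, {x : (EuclideanSpace ℝ (Fin d)) | 0 < l i x} := by
      ext x; simp
    rw [this]
    exact isOpen_biInter_finset (fun i _ => isOpen_lt continuous_const (hcont i))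
  have hKuniv : K = {y : (EuclideanSpace ℝ (Fin d)) | ∀ i ∈ (Finset.univ : Finset ι), 0 ≤ l i y} := by
    rw [hK]; ext x; simp
  obtain ⟨x₀, hx₀⟩ := hKint
  have hx₀pos : ∀ i, 0 < l i x₀ := by
    intro i
    apply hstrict Finset.univ x₀ _ i (Finset.mem_univ i)
    rw [← hKuniv]
    exact hx₀
  -- the set of touching normals
  set sset : Set (EuclideanSpace ℝ (Fin d)) := n '' {i | m i = 0} with hsset
  have hfin : sset.Finite := (Set.finite_range n).subset (Set.image_subset_range _ _)
  -- 0 is in the convex hull of touching normals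
  have h0conv : (0:(EuclideanSpace ℝ (Fin d))) ∈ convexHull ℝ sset := by
    by_contra h0
    obtain ⟨f, u, hfu, hu0⟩ := geometric_hahn_banach_closed_point
      (convex_convexHull ℝ sset) (hfin.isCompact_convexHull ℝ).isClosed h0
    rw [map_zero] at hu0
    set v : (EuclideanSpace ℝ (Fin d)) := -((InnerProductSpace.toDual ℝ (EuclideanSpace ℝ (Fin d))).symm f) with hv
    have hvpos : ∀ i, m i = 0 → 0 < ⟪n i, v⟫ := by
      intro i hi
      have h1 : f (n i) < u := hfu _ (subset_convexHull ℝ _ ⟨i, hi, rfl⟩)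
      have h2 : ⟪(InnerProductSpace.toDual ℝ (EuclideanSpace ℝ (Fin d))).symm f, n i⟫ = f (n i) :=
        InnerProductSpace.toDual_symm_apply
      have h3 : ⟪n i, v⟫ = -f (n i) := by
        rw [hv, inner_neg_right, real_inner_comm, h2]
      rw [h3]
      linarith
    obtain ⟨ε, hε, hεlt⟩ : ∃ ε > 0, ∀ i, m i ≠ 0 → ε * |⟪n i, v⟫| < m i := by
      rcases Finset.eq_empty_or_nonempty (Finset.univ.filter fun i => m i ≠ 0) with hF | hF
      · refine ⟨1, one_pos, ?_⟩
        intro i hi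
        have hmem : i ∈ Finset.univ.filter (fun i => m i ≠ 0) :=
          Finset.mem_filter.2 ⟨Finset.mem_univ i, hi⟩
        rw [hF] at hmem
        exact absurd hmem (Finset.notMem_empty i)
      · obtain ⟨i₀, hi₀mem, hi₀min⟩ :=
          Finset.exists_min_image _ (fun i => m i / (1 + |⟪n i, v⟫|)) hF
        have hmi₀ : 0 < m i₀ :=
          lt_of_le_of_ne (hm0 i₀) (Ne.symm (Finset.mem_filter.1 hi₀mem).2)
        refine ⟨(1/2) * (m i₀ / (1 + |⟪n i₀, v⟫|)), by positivity, ?_⟩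
        intro i hi
        have hmi : 0 < m i := lt_of_le_of_ne (hm0 i) (Ne.symm hi)
        have hge := hi₀min i (Finset.mem_filter.2 ⟨Finset.mem_univ i, hi⟩)
        have habs : (0:ℝ) ≤ |⟪n i, v⟫| := abs_nonneg _
        have hlt1 : |⟪n i, v⟫| / (1 + |⟪n i, v⟫|) < 1 := by
          rw [div_lt_one (by positivity)]
          linarith
        calc (1/2) * (m i₀ / (1 + |⟪n i₀, v⟫|)) * |⟪n i, v⟫|
            ≤ (1/2) * (m i / (1 + |⟪n i, v⟫|)) * |⟪n i, v⟫| := by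
              apply mul_le_mul_of_nonneg_right _ habs
              linarith
          _ = (1/2) * m i * (|⟪n i, v⟫| / (1 + |⟪n i, v⟫|)) := by ring
          _ ≤ (1/2) * m i * 1 := by
              apply mul_le_mul_of_nonneg_left (le_of_lt hlt1) (by positivity)
          _ < m i := by
              rw [mul_one]
              nlinarith [hmi]
    apply hinsc (ε • v)
    have hsub : (fun e => ε • v + e) '' Ell ⊆ {x : (EuclideanSpace ℝ (Fin d)) | ∀ i ∈ (Finset.univ : Finset ι), 0 < l i x} := by
      rintro x ⟨e, heE, rfl⟩
      intro i _
      have hle : l i (ε • v + e) = ε * ⟪n i, v⟫ + l i e := by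
        rw [hl, hl, inner_add_right, real_inner_smul_right]
        ring
      rw [hle]
      rcases eq_or_ne (m i) 0 with h | h
      · have h1 := hvpos i h
        have h2 : 0 ≤ l i e := by rw [← h]; exact hmle i e heE
        have h3 := mul_pos hε h1
        linarith
      · have h1 := hεlt i h
        have h2 : -(ε * |⟪n i, v⟫|) ≤ ε * ⟪n i, v⟫ := by
          have := neg_abs_le (⟪n i, v⟫)
          nlinarith [abs_nonneg (⟪n i, v⟫)]
        have h3 := hmle i e heE
        linarith
    intro x hx
    have := hsub hx
    apply interior_maximal _ (hopen Finset.univ) this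
    rw [hKuniv]
    intro y hy i hi
    exact le_of_lt (hy i hi)
  -- a minimal finset carrying 0 in its convex hull
  have hex : ∃ k : ℕ, ∃ t : Finset (EuclideanSpace ℝ (Fin d)), t.card = k ∧ ↑t ⊆ sset ∧
      (0:(EuclideanSpace ℝ (Fin d))) ∈ convexHull ℝ (↑t : Set (EuclideanSpace ℝ (Fin d))) := by
    refine ⟨hfin.toFinset.card, hfin.toFinset, rfl, ?_, ?_⟩
    · rw [Set.Finite.coe_toFinset]
    · rw [Set.Finite.coe_toFinset]; exact h0conv
  obtain ⟨t, htc, hts, ht0⟩ := Nat.find_spec hex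
  have hmin : ∀ t' : Finset (EuclideanSpace ℝ (Fin d)), ↑t' ⊆ sset → (0:(EuclideanSpace ℝ (Fin d))) ∈ convexHull ℝ (↑t' : Set (EuclideanSpace ℝ (Fin d))) →
      t.card ≤ t'.card := by
    intro t' h1 h2
    rw [htc]
    exact Nat.find_min' hex ⟨t', rfl, h1, h2⟩
  -- t is affinely independent
  have htai : AffineIndependent ℝ (Subtype.val : {x // x ∈ t} → (EuclideanSpace ℝ (Fin d))) := by
    have ht0' := ht0
    rw [convexHull_eq_union] at ht0'
    simp only [Set.mem_iUnion] at ht0'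
    obtain ⟨t', hsub, hai', h0'⟩ := ht0'
    have hsub' : t' ⊆ t := Finset.coe_subset.1 hsub
    have : t' = t := Finset.eq_of_subset_of_card_le hsub'
      (hmin t' (subset_trans hsub hts) h0')
    subst this
    exact hai'
  -- weights
  have ht0w : (0:EuclideanSpace ℝ (Fin d)) ∈ {x : EuclideanSpace ℝ (Fin d) |
      ∃ w : EuclideanSpace ℝ (Fin d) → ℝ,
        (∀ y ∈ t, 0 ≤ w y) ∧ ∑ y ∈ t, w y = 1 ∧ t.centerMass w id = x} := by
    rw [← Finset.convexHull_eq]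
    exact ht0
  obtain ⟨μ, hμ0, hμ1, hμc⟩ := ht0w
  have hμsum : ∑ y ∈ t, μ y • y = 0 := by
    have := Finset.centerMass_eq_of_sum_1 t (id : (EuclideanSpace ℝ (Fin d)) → (EuclideanSpace ℝ (Fin d))) hμ1
    rw [hμc] at this
    simpa using this.symm
  have hμpos : ∀ y ∈ t, 0 < μ y := by
    intro y hy
    rcases lt_or_eq_of_le (hμ0 y hy) with h | h
    · exact h
    · exfalso
      have herase : (0:(EuclideanSpace ℝ (Fin d))) ∈ convexHull ℝ (↑(t.erase y) : Set (EuclideanSpace ℝ (Fin d))) := by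
        rw [Finset.convexHull_eq]
        refine ⟨μ, fun z hz => hμ0 z (Finset.mem_of_mem_erase hz), ?_, ?_⟩
        · rw [Finset.sum_erase_eq_sub hy, hμ1, ← h]
          ring
        · rw [Finset.centerMass_eq_of_sum_1]
          · simp only [id_eq]
            rw [Finset.sum_erase_eq_sub hy, hμsum, ← h]
            simp
          · rw [Finset.sum_erase_eq_sub hy, hμ1, ← h]; ring
      have := hmin (t.erase y) (subset_trans (Finset.coe_subset.2 (Finset.erase_subset y t)) hts) herase
      have hcard : (t.erase y).card = t.card - 1 := Finset.card_erase_of_mem hy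
      have hpos : 0 < t.card := Finset.card_pos.2 ⟨y, hy⟩
      omega
  -- t has at least 2 elements
  have htcard : 2 ≤ t.card := by
    by_contra hlt
    push_neg at hlt
    interval_cases h : t.card
    · rw [Finset.card_eq_zero] at h
      subst h
      simp at ht0
    · rw [Finset.card_eq_one] at h
      obtain ⟨u, rfl⟩ := h
      simp only [Finset.coe_singleton, convexHull_singleton, Set.mem_singleton_iff] at ht0
      have : u ∈ sset := hts (by simp)
      obtain ⟨i, _, rfl⟩ := this
      exact hn i ht0.symm
  obtain ⟨jj, hcard⟩ : ∃ jj : ℕ, t.card = jj + 1 := ⟨t.card - 1, by omega⟩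
  have hjj1 : 1 ≤ jj := by omega
  have hcardco : Fintype.card {x // x ∈ t} = jj + 1 := by
    rw [Fintype.card_coe]; exact hcard
  have hfrvs : finrank ℝ (vectorSpan ℝ (Set.range (Subtype.val : {x // x ∈ t} → (EuclideanSpace ℝ (Fin d))))) = jj :=
    htai.finrank_vectorSpan hcardco
  have hrange : Set.range (Subtype.val : {x // x ∈ t} → (EuclideanSpace ℝ (Fin d))) = (↑t : Set (EuclideanSpace ℝ (Fin d))) := Subtype.range_val
  have hfrE : finrank ℝ (EuclideanSpace ℝ (Fin d)) = d := finrank_euclideanSpace_fin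
  have hjjd : jj ≤ d := by
    have h9 := Submodule.finrank_le
      (vectorSpan ℝ (Set.range (Subtype.val : {x // x ∈ t} → (EuclideanSpace ℝ (Fin d)))))
    rw [hfrvs, hfrE] at h9
    exact h9
  -- choose indices
  have hgex : ∀ u : {x // x ∈ t}, ∃ i, m i = 0 ∧ n i = (u : (EuclideanSpace ℝ (Fin d))) := by
    intro u
    obtain ⟨i, hi, hni⟩ := hts u.2
    exact ⟨i, hi, hni⟩
  choose g hg1 hg2 using hgex
  set A : Finset ι := t.attach.image g with hA
  set S : Set (EuclideanSpace ℝ (Fin d)) := {x : (EuclideanSpace ℝ (Fin d)) | ∀ i ∈ A, 0 ≤ l i x} with hS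
  -- enumeration
  set e : Fin (jj + 1) ≃ {x // x ∈ t} := (t.equivFin.trans (finCongr hcard)).symm with he
  set w : Fin (jj + 1) → (EuclideanSpace ℝ (Fin d)) := fun k => ((e k : {x // x ∈ t}) : (EuclideanSpace ℝ (Fin d))) with hw
  set lam : Fin (jj + 1) → ℝ := fun k => μ (w k) with hlam
  set b : Fin (jj + 1) → ℝ := fun k => c (g (e k)) with hb
  have hwmem : ∀ k, w k ∈ t := fun k => (e k).2
  have hwai : AffineIndependent ℝ w := htai.comp_embedding e.toEmbedding
  have hlampos : ∀ k, 0 < lam k := fun k => hμpos _ (hwmem k)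
  -- sums over Fin (jj+1) equal sums over t
  have hsum_eq : ∀ (F : (EuclideanSpace ℝ (Fin d)) → ℝ), ∑ k, F (w k) = ∑ y ∈ t, F y := by
    intro F
    rw [← Finset.sum_attach t F]
    exact Equiv.sum_comp e (fun u => F (u : (EuclideanSpace ℝ (Fin d))))
  have hsum_eqv : ∀ (F : (EuclideanSpace ℝ (Fin d)) → (EuclideanSpace ℝ (Fin d))), ∑ k, F (w k) = ∑ y ∈ t, F y := by
    intro F
    rw [← Finset.sum_attach t F]
    exact Equiv.sum_comp e (fun u => F (u : (EuclideanSpace ℝ (Fin d))))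
  have hlamsum : ∑ k, lam k = 1 := by
    have h1 : ∑ k, lam k = ∑ y ∈ t, μ y := hsum_eq (fun y => μ y)
    exact h1.trans hμ1
  have hzero : ∑ k, lam k • w k = 0 := by
    have h1 : ∑ k, lam k • w k = ∑ y ∈ t, μ y • y := hsum_eqv (fun y => μ y • y)
    exact h1.trans hμsum
  have hgn : ∀ k, n (g (e k)) = w k := fun k => hg2 (e k)
  -- the polyhedron S as an explicit halfspace intersection
  have hSA : S = {x : (EuclideanSpace ℝ (Fin d)) | ∀ k, 0 ≤ ⟪w k, x⟫ + b k} := by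
    ext x
    simp only [hS, Set.mem_setOf_eq]
    constructor
    · intro h k
      have hik : g (e k) ∈ A := Finset.mem_image.2 ⟨e k, Finset.mem_attach _ _, rfl⟩
      have := h _ hik
      rw [hl, hgn] at this
      exact this
    · intro h i hi
      obtain ⟨u, _, rfl⟩ := Finset.mem_image.1 hi
      have := h (e.symm u)
      rw [hl]
      have h2 : n (g u) = (u : (EuclideanSpace ℝ (Fin d))) := hg2 u
      have h3 : w (e.symm u) = (u : (EuclideanSpace ℝ (Fin d))) := by
        simp only [hw]
        rw [e.apply_symm_apply]
      rw [h3] at this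
      rw [h2]
      simpa [hb, e.apply_symm_apply] using this
  -- β > 0
  have hβpos : 0 < ∑ k, lam k * b k := by
    have hkey : ∑ k, lam k * (⟪w k, x₀⟫ + b k) = ∑ k, lam k * b k := by
      have h1 : ∑ k, lam k * (⟪w k, x₀⟫ + b k)
          = ∑ k, (lam k * ⟪w k, x₀⟫ + lam k * b k) := by
        exact Finset.sum_congr rfl (fun k _ => by ring)
      rw [h1, Finset.sum_add_distrib]
      have h2 : ∑ k, lam k * ⟪w k, x₀⟫ = 0 := by
        have : ∀ k : Fin (jj+1), lam k * ⟪w k, x₀⟫ = ⟪lam k • w k, x₀⟫ := by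
          intro k; rw [real_inner_smul_left]
        rw [Finset.sum_congr rfl (fun k _ => this k), ← sum_inner, hzero, inner_zero_left]
      rw [h2, zero_add]
    rw [← hkey]
    apply Finset.sum_pos _ Finset.univ_nonempty
    intro k _
    apply mul_pos (hlampos k)
    have := hx₀pos (g (e k))
    rw [hl, hgn] at this
    exact this
  -- (EuclideanSpace ℝ (Fin d)) is inscribed in S
  have hins : ∀ v : (EuclideanSpace ℝ (Fin d)), ¬ ((fun e => v + e) '' Ell ⊆ interior S) := by
    intro v hv
    have hpos : ∀ k : Fin (jj+1), 0 < ⟪w k, v⟫ := by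
      intro k
      obtain ⟨e0, he0E, he0⟩ := hmex (g (e k))
      have hmem : v + e0 ∈ interior S := hv ⟨e0, he0E, rfl⟩
      have h2 := hstrict A _ hmem (g (e k)) (Finset.mem_image.2 ⟨e k, Finset.mem_attach _ _, rfl⟩)
      rw [hl, inner_add_right] at h2
      have h4 : ⟪n (g (e k)), e0⟫ + c (g (e k)) = m (g (e k)) := by
        rw [← hl]; exact he0
      have h5 : m (g (e k)) = 0 := hg1 (e k)
      rw [hgn] at h2 h4
      linarith
    have hcontr : (0:ℝ) < ⟪(0:(EuclideanSpace ℝ (Fin d))), v⟫ := by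
      rw [← hzero, sum_inner]
      apply Finset.sum_pos _ Finset.univ_nonempty
      intro k _
      rw [real_inner_smul_left]
      exact mul_pos (hlampos k) (hpos k)
    rw [inner_zero_left] at hcontr
    linarith
  -- K ⊆ S
  have hKS : K ⊆ S := by
    intro x hx i _
    rw [hK] at hx
    exact hx i
  refine ⟨A, hKS, ?_, hins⟩
  -- now the two cases
  rcases eq_or_lt_of_le hjjd with hcase | hcase
  · -- jj = d : simplex
    left
    subst hcase
    obtain ⟨q, hqai, hqeq⟩ := simplex_lemma hfrE w lam b hlampos hlamsum hzero hwai hβpos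
    exact ⟨q, hqai, by rw [← hS, hSA, hqeq]⟩
  · -- jj < d : strip
    right
    set V : Submodule ℝ (EuclideanSpace ℝ (Fin d)) := Submodule.span ℝ (↑t : Set (EuclideanSpace ℝ (Fin d))) with hV
    have hVvs : V = vectorSpan ℝ (↑t : Set (EuclideanSpace ℝ (Fin d))) := by
      apply le_antisymm
      · rw [hV]
        apply Submodule.span_le.2
        intro u hu
        have h0aff : (0:(EuclideanSpace ℝ (Fin d))) ∈ affineSpan ℝ (↑t : Set (EuclideanSpace ℝ (Fin d))) := convexHull_subset_affineSpan _ ht0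
        have huaff : u ∈ affineSpan ℝ (↑t : Set (EuclideanSpace ℝ (Fin d))) := subset_affineSpan ℝ _ hu
        have := AffineSubspace.vsub_mem_direction huaff h0aff
        rw [direction_affineSpan] at this
        simpa using this
      · rw [vectorSpan_def]
        apply Submodule.span_le.2
        rintro x ⟨u1, hu1, u2, hu2, rfl⟩
        exact sub_mem (Submodule.subset_span hu1) (Submodule.subset_span hu2)
    have hVfr : finrank ℝ V = jj := by
      rw [hVvs, ← hrange]
      exact hfrvs
    set w' : Fin (jj + 1) → V := fun k => ⟨w k, Submodule.subset_span (hwmem k)⟩ with hw'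
    have hw'ai : AffineIndependent ℝ w' := by
      apply AffineIndependent.of_comp (V.subtype.toAffineMap)
      have : (V.subtype.toAffineMap) ∘ w' = w := rfl
      rw [this]
      exact hwai
    have hzero' : ∑ k, lam k • w' k = 0 := by
      apply Submodule.injective_subtype V
      rw [map_sum, map_zero]
      simp only [map_smul]
      exact hzero
    obtain ⟨q, hqai, hqeq⟩ := simplex_lemma hVfr w' lam b hlampos hlamsum hzero' hw'ai hβpos
    refine ⟨jj, hjj1, hcase, V, q, hVfr, hqai, ?_⟩
    rw [← hS, hSA, ← hqeq]
    ext x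
    simp only [Set.mem_setOf_eq]
    have hproj : ∀ k, ⟪w k, x⟫ = ⟪w' k, Submodule.orthogonalProjectionOnto V x⟫ := by
      intro k
      have horth : x - ↑(Submodule.orthogonalProjectionOnto V x) ∈ Vᗮ :=
        Submodule.sub_starProjection_mem_orthogonal x
      have h1 : ⟪w k, x - ↑(Submodule.orthogonalProjectionOnto V x)⟫ = 0 :=
        (Submodule.mem_orthogonal V _).1 horth (w k) (Submodule.subset_span (hwmem k))
      have h2 : ⟪w' k, Submodule.orthogonalProjectionOnto V x⟫
          = ⟪w k, (↑(Submodule.orthogonalProjectionOnto V x) : (EuclideanSpace ℝ (Fin d)))⟫ := rfl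
      rw [h2]
      rw [inner_sub_right] at h1
      linarith
    constructor
    · intro h k
      rw [← hproj k]
      exact h k
    · intro h k
      rw [hproj k]
      exact h k
end
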